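/- arXiv:2101.04638 — 6 statements merged into one kernel-verified Lean document; each statement's English description precedes it below -/
import Mathlib

section
/- Let X > e, let N be a positive integer, and let a = (a_0, a_1, …, a_{N−1}) ∈ ℂ^N. Put X_j = 2^j X for j = 0, 1, …, N−1. Then the system of linear equations Σ_{j=0}^{N−1} (−log X_j)^k z_j = a_k for k = 0, 1, …, N−1 has a unique solution z₀ = (z_0, …, z_{N−1}) ∈ ℂ^N, and there is a constant C_N depending only on N such that ‖z₀‖ ≤ C_N (log X)^{N−1} ‖a‖. -/
open Matrix Finset

noncomputable def vsV0 (N : ℕ) : Matrix (Fin N) (Fin N) ℂ :=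
  Matrix.of fun k j => (-(j : ℕ) * (Real.log 2 : ℂ)) ^ (k : ℕ)

lemma vsV0_det_ne (N : ℕ) : (vsV0 N).det ≠ 0 := by
  have : vsV0 N = (Matrix.vandermonde fun j : Fin N => -(j : ℕ) * (Real.log 2 : ℂ))ᵀ := by
    ext k j; simp [vsV0, Matrix.vandermonde_apply]
  rw [this, Matrix.det_transpose]
  rw [Matrix.det_vandermonde_ne_zero_iff]
  intro i j h
  have h2 : (Real.log 2 : ℂ) ≠ 0 := by
    simp only [ne_eq, Complex.ofReal_eq_zero]
    exact Real.log_ne_zero_of_pos_of_ne_one (by norm_num) (by norm_num)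
  have h3 : -((i : ℕ) : ℂ) = -((j : ℕ) : ℂ) := mul_right_cancel₀ h2 h
  have : ((i : ℕ) : ℂ) = ((j : ℕ) : ℂ) := neg_inj.mp h3
  exact Fin.ext (by exact_mod_cast this)

noncomputable def vsAinv (N : ℕ) (L : ℝ) : Matrix (Fin N) (Fin N) ℂ :=
  Matrix.of fun m k => ((m : ℕ).choose (k : ℕ) : ℂ) * (L : ℂ) ^ ((m : ℕ) - (k : ℕ))

lemma vsAinv_det (N : ℕ) (L : ℝ) : (vsAinv N L).det = 1 := by
  rw [Matrix.det_of_lowerTriangular]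
  · simp [vsAinv]
  · intro i j hij
    simp only [OrderDual.toDual_lt_toDual] at hij
    simp [vsAinv, Nat.choose_eq_zero_of_lt (show (i:ℕ) < (j:ℕ) from hij)]

lemma vs_choose_le (m k : ℕ) : m.choose k ≤ 2 ^ m := by
  rcases le_or_gt k m with h | h
  · calc m.choose k ≤ ∑ i ∈ Finset.range (m+1), m.choose i :=
        Finset.single_le_sum (fun _ _ => Nat.zero_le _) (Finset.mem_range.mpr (by omega))
      _ = 2 ^ m := Nat.sum_range_choose m
  · simp [Nat.choose_eq_zero_of_lt h]

lemma vs_binom (n N : ℕ) (hn : n < N) (s Lc : ℂ) :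
    ∑ k : Fin N, ((n.choose (k : ℕ) : ℂ) * Lc ^ (n - (k : ℕ))) * (s - Lc) ^ (k : ℕ)
      = s ^ n := by
  rw [Fin.sum_univ_eq_sum_range (fun k => ((n.choose k : ℂ) * Lc ^ (n - k)) * (s - Lc) ^ k) N]
  rw [← Finset.sum_subset (Finset.range_subset_range.mpr hn)
      (fun x _ hx => by
        have : n < x := by simpa using hx
        simp [Nat.choose_eq_zero_of_lt this])]
  have h := add_pow (s - Lc) Lc n
  rw [sub_add_cancel] at h
  rw [h]
  exact Finset.sum_congr rfl fun k _ => by ring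

lemma vs_factor (N : ℕ) (X : ℝ) (hX : 0 < X) :
    vsAinv N (Real.log X) *
      (Matrix.of fun (k j : Fin N) => ((-Real.log (2 ^ (j : ℕ) * X) : ℂ)) ^ (k : ℕ))
      = vsV0 N := by
  ext m j
  have ht : ((-Real.log (2 ^ (j : ℕ) * X) : ℂ))
      = (-(j : ℕ) * (Real.log 2 : ℂ)) - (Real.log X : ℂ) := by
    rw [Real.log_mul (by positivity) (ne_of_gt hX), Real.log_pow]
    push_cast
    ring
  simp only [Matrix.mul_apply, vsAinv, vsV0, Matrix.of_apply, ht]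
  exact vs_binom (m : ℕ) N m.isLt _ _


/-- **Lemma 2.1 (Vandermonde system).**  For `X > e` and nodes `X_j = 2^j X`, the system
`∑_j (-log X_j)^k z_j = a_k` (k = 0, …, N-1) has a unique solution `z₀`, and the solution
satisfies `‖z₀‖ ≤ C_N (log X)^{N-1} ‖a‖` with a constant depending only on `N`. -/
theorem vandermonde_system (N : ℕ) (hN : 0 < N) :
    ∃ C : ℝ, 0 < C ∧
      ∀ X : ℝ, Real.exp 1 < X → ∀ a : Fin N → ℂ,
        (∃! z : Fin N → ℂ, ∀ k : Fin N,
          ∑ j : Fin N, ((-Real.log (2 ^ (j : ℕ) * X) : ℂ)) ^ (k : ℕ) * z j = a k) ∧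
        ∀ z : Fin N → ℂ,
          (∀ k : Fin N,
            ∑ j : Fin N, ((-Real.log (2 ^ (j : ℕ) * X) : ℂ)) ^ (k : ℕ) * z j = a k) →
          (∑ j, ‖z j‖) ≤ C * Real.log X ^ (N - 1) * ∑ k, ‖a k‖ := by
  classical
  set W := (vsV0 N)⁻¹ with hWdef
  have hdet0 : IsUnit (vsV0 N).det := (vsV0_det_ne N).isUnit
  set B : ℝ := ∑ j : Fin N, ∑ m : Fin N, ‖W j m‖ with hBdef
  have hB0 : 0 ≤ B :=
    Finset.sum_nonneg fun _ _ => Finset.sum_nonneg fun _ _ => norm_nonneg _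
  refine ⟨(B + 1) * 2 ^ N, mul_pos (by linarith) (by positivity), ?_⟩
  intro X hX a
  have hXpos : 0 < X := lt_trans (Real.exp_pos 1) hX
  set L := Real.log X with hLdef
  have hL1 : 1 < L := by
    have := Real.log_lt_log (Real.exp_pos 1) hX
    rwa [Real.log_exp] at this
  set V : Matrix (Fin N) (Fin N) ℂ :=
    Matrix.of fun (k j : Fin N) => ((-Real.log (2 ^ (j : ℕ) * X) : ℂ)) ^ (k : ℕ) with hVdef
  have hsys : ∀ z : Fin N → ℂ,
      (∀ k : Fin N, ∑ j : Fin N, ((-Real.log (2 ^ (j : ℕ) * X) : ℂ)) ^ (k : ℕ) * z j = a k)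
        ↔ V *ᵥ z = a := by
    intro z
    rw [funext_iff]
    apply forall_congr'
    intro k
    simp [hVdef, Matrix.mulVec, dotProduct]
  set Ai := vsAinv N L with hAidef
  have hfac : Ai * V = vsV0 N := vs_factor N X hXpos
  have hAdet : IsUnit Ai.det := by rw [hAidef, vsAinv_det]; exact isUnit_one
  set z₀ := W *ᵥ (Ai *ᵥ a) with hz₀def
  have huniq : ∀ z, V *ᵥ z = a → z = z₀ := by
    intro z hz
    have h1 : vsV0 N *ᵥ z = Ai *ᵥ a := by
      rw [← hfac, ← Matrix.mulVec_mulVec, hz]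
    calc z = (1 : Matrix (Fin N) (Fin N) ℂ) *ᵥ z := by simp
    _ = (W * vsV0 N) *ᵥ z := by rw [Matrix.nonsing_inv_mul _ hdet0]
    _ = W *ᵥ (vsV0 N *ᵥ z) := by rw [Matrix.mulVec_mulVec]
    _ = z₀ := by rw [h1]
  have hsol : V *ᵥ z₀ = a := by
    have h2 : Ai *ᵥ (V *ᵥ z₀) = Ai *ᵥ a := by
      rw [hz₀def]
      simp only [Matrix.mulVec_mulVec, ← Matrix.mul_assoc, hfac, hWdef,
        Matrix.mul_nonsing_inv _ hdet0, Matrix.one_mul]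
    have h3 := congrArg (fun v => Ai⁻¹ *ᵥ v) h2
    simpa only [Matrix.mulVec_mulVec, ← Matrix.mul_assoc,
      Matrix.nonsing_inv_mul _ hAdet, Matrix.one_mulVec, Matrix.one_mul] using h3
  refine ⟨⟨z₀, (hsys z₀).mpr hsol, fun z hz => huniq z ((hsys z).mp hz)⟩, ?_⟩
  intro z hz
  rw [huniq z ((hsys z).mp hz)]
  have hS : 0 ≤ ∑ k, ‖a k‖ := Finset.sum_nonneg fun _ _ => norm_nonneg _
  have hLp : (0:ℝ) ≤ L ^ (N - 1) := by positivity
  have hAia : ∀ m : Fin N, ‖(Ai *ᵥ a) m‖ ≤ 2 ^ N * L ^ (N - 1) * ∑ k, ‖a k‖ := by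
    intro m
    have h4 : ∀ k : Fin N, ‖Ai m k‖ ≤ 2 ^ N * L ^ (N - 1) := by
      intro k
      have hnorm : ‖Ai m k‖
          = ((m : ℕ).choose (k : ℕ) : ℝ) * L ^ ((m : ℕ) - (k : ℕ)) := by
        simp only [hAidef, vsAinv, Matrix.of_apply, norm_mul]
        rw [Complex.norm_natCast, ← Complex.ofReal_pow, Complex.norm_real,
          Real.norm_eq_abs, abs_of_nonneg (by positivity)]
      have hc : ((m : ℕ).choose (k : ℕ) : ℝ) ≤ 2 ^ N := by
        have := (vs_choose_le (m : ℕ) (k : ℕ)).trans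
          (Nat.pow_le_pow_right (by norm_num) (le_of_lt m.isLt))
        exact_mod_cast this
      have hl : L ^ ((m : ℕ) - (k : ℕ)) ≤ L ^ (N - 1) := by
        apply pow_le_pow_right₀ hL1.le
        omega
      have h0 : (0:ℝ) ≤ L ^ ((m : ℕ) - (k : ℕ)) := by positivity
      rw [hnorm]
      exact mul_le_mul hc hl h0 (by positivity)
    have e1 : ‖(Ai *ᵥ a) m‖ ≤ ∑ k, ‖Ai m k * a k‖ := by
      simpa [Matrix.mulVec, dotProduct] using
        norm_sum_le Finset.univ (fun k => Ai m k * a k)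
    have e2 : ∑ k, ‖Ai m k * a k‖ ≤ ∑ k, (2 ^ N * L ^ (N - 1)) * ‖a k‖ := by
      refine Finset.sum_le_sum fun k _ => ?_
      rw [norm_mul]
      exact mul_le_mul_of_nonneg_right (h4 k) (norm_nonneg _)
    have e3 : ∑ k, (2 ^ N * L ^ (N - 1)) * ‖a k‖
        = 2 ^ N * L ^ (N - 1) * ∑ k, ‖a k‖ := by rw [← Finset.mul_sum]
    linarith
  have f1 : ∑ j, ‖z₀ j‖ ≤ ∑ j : Fin N, ∑ m : Fin N, ‖W j m‖ * ‖(Ai *ᵥ a) m‖ := by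
    refine Finset.sum_le_sum fun j _ => ?_
    have : ‖z₀ j‖ ≤ ∑ m, ‖W j m * (Ai *ᵥ a) m‖ := by
      simpa only [hz₀def, Matrix.mulVec, dotProduct] using
        norm_sum_le Finset.univ (fun m => W j m * (Ai *ᵥ a) m)
    simpa [norm_mul] using this
  have f2 : ∑ j : Fin N, ∑ m : Fin N, ‖W j m‖ * ‖(Ai *ᵥ a) m‖
      ≤ ∑ j : Fin N, ∑ m : Fin N, ‖W j m‖ * (2 ^ N * L ^ (N - 1) * ∑ k, ‖a k‖) := by
    refine Finset.sum_le_sum fun j _ => Finset.sum_le_sum fun m _ => ?_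
    exact mul_le_mul_of_nonneg_left (hAia m) (norm_nonneg _)
  have f3 : ∑ j : Fin N, ∑ m : Fin N, ‖W j m‖ * (2 ^ N * L ^ (N - 1) * ∑ k, ‖a k‖)
      = B * (2 ^ N * L ^ (N - 1) * ∑ k, ‖a k‖) := by
    rw [hBdef]
    simp [Finset.sum_mul]
  have f4 : B * (2 ^ N * L ^ (N - 1) * ∑ k, ‖a k‖)
      ≤ (B + 1) * 2 ^ N * L ^ (N - 1) * ∑ k, ‖a k‖ := by
    have h5 : (0:ℝ) ≤ 2 ^ N * L ^ (N - 1) * ∑ k, ‖a k‖ := by positivity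
    nlinarith [h5]
  linarith
end

section
/- Let N be a positive integer larger than two, and suppose positive real numbers r_1 ≤ r_2 ≤ ⋯ ≤ r_N satisfy r_N ≤ Σ_{n=1}^{N−1} r_n. Then { Σ_{n=1}^N r_n · exp(−2πi θ_n) : θ_1, …, θ_N ∈ [0,1) } = { z ∈ ℂ : |z| ≤ Σ_{n=1}^N r_n }; that is, the sums with arbitrary phases fill out the entire closed disk of radius Σ_{n=1}^N r_n centered at the origin. -/
open Complex


lemma two_circle (b c : ℝ) (hb : 0 ≤ b) (hc : 0 ≤ c) (z : ℂ)
    (h1 : |b - c| ≤ ‖z‖) (h2 : ‖z‖ ≤ b + c) :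
    ∃ u v : ℂ, ‖u‖ = b ∧ ‖v‖ = c ∧ u + v = z := by
  set d := ‖z‖ with hd
  have hd0 : 0 ≤ d := norm_nonneg z
  rcases eq_or_lt_of_le hd0 with h0 | h0
  · have hz : z = 0 := by rwa [eq_comm, norm_eq_zero] at h0
    have hbc : b = c := by
      have : |b - c| ≤ 0 := by rw [← h0] at h1; exact h1
      have := abs_nonpos_iff.mp this
      linarith
    refine ⟨(b : ℂ), -(b : ℂ), ?_, ?_, ?_⟩
    · simp [Complex.norm_real, _root_.abs_of_nonneg hb]
    · simp [Complex.norm_real, hbc, _root_.abs_of_nonneg hc]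
    · simp [hz]
  · have hb1 : b - c ≤ d := (abs_le.mp h1).2
    have hb2 : -(d) ≤ b - c := (abs_le.mp h1).1
    set x := (d^2 + b^2 - c^2) / (2*d) with hx
    have hxb : x^2 ≤ b^2 := by
      rw [hx, div_pow]
      rw [div_le_iff₀ (by positivity)]
      have e1 : 0 ≤ b + d - c := by linarith
      have e2 : 0 ≤ b + d + c := by linarith
      have e3 : 0 ≤ c + d - b := by linarith
      have e4 : 0 ≤ c + b - d := by linarith
      nlinarith [mul_nonneg (mul_nonneg (mul_nonneg e1 e2) e3) e4]
    set y := Real.sqrt (b^2 - x^2) with hy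
    have hy2 : y^2 = b^2 - x^2 := Real.sq_sqrt (by linarith)
    set u0 : ℂ := ⟨x, y⟩ with hu0
    have hnu0 : ‖u0‖ = b := by
      rw [Complex.norm_def, Complex.normSq_mk]
      rw [show x*x + y*y = b^2 by nlinarith]
      exact Real.sqrt_sq hb
    set v0 : ℂ := (d : ℂ) - u0 with hv0
    have hnv0 : ‖v0‖ = c := by
      have hre : (((d:ℝ) : ℂ) - u0).re = d - x := by simp [hu0]
      have him : (((d:ℝ) : ℂ) - u0).im = -y := by simp [hu0]
      rw [Complex.norm_def, hv0, Complex.normSq_apply, hre, him]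
      rw [show (d-x)*(d-x) + -y * -y = c^2 by
        have h2dx : 2*d*x = d^2 + b^2 - c^2 := by
          rw [hx]; field_simp
        nlinarith]
      exact Real.sqrt_sq hc
    have hdC : ((d:ℝ) : ℂ) ≠ 0 := by exact_mod_cast ne_of_gt h0
    refine ⟨(z / d) * u0, (z / d) * v0, ?_, ?_, ?_⟩
    · rw [norm_mul, norm_div, Complex.norm_real, Real.norm_of_nonneg hd0, ← hd,
        div_self (ne_of_gt h0), one_mul, hnu0]
    · rw [norm_mul, norm_div, Complex.norm_real, Real.norm_of_nonneg hd0, ← hd,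
        div_self (ne_of_gt h0), one_mul, hnv0]
    · rw [← mul_add, hv0]
      rw [show u0 + (((d:ℝ):ℂ) - u0) = ((d:ℝ):ℂ) by ring]
      rw [div_mul_eq_mul_div, mul_div_assoc, div_self hdC, mul_one]


lemma exists_theta (s : ℝ) (hs : 0 ≤ s) (u : ℂ) (hu : ‖u‖ = s) :
    ∃ θ : ℝ, θ ∈ Set.Ico (0 : ℝ) 1 ∧
      (s : ℂ) * Complex.exp (-(2 * (Real.pi : ℂ) * Complex.I * (θ : ℂ))) = u := by
  rcases eq_or_lt_of_le hs with h0 | h0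
  · refine ⟨0, ⟨le_refl 0, one_pos⟩, ?_⟩
    have : u = 0 := by rwa [← h0, norm_eq_zero] at hu
    simp [this, ← h0]
  · set t := u.arg with ht
    set θ : ℝ := Int.fract (-t / (2 * Real.pi)) with hθ
    refine ⟨θ, ⟨Int.fract_nonneg _, Int.fract_lt_one _⟩, ?_⟩
    have hπ : (Real.pi : ℂ) ≠ 0 := by exact_mod_cast Real.pi_ne_zero
    have key : -(2 * (Real.pi : ℂ) * Complex.I * (θ : ℂ)) =
        (t : ℂ) * Complex.I + (↑(⌊-t / (2 * Real.pi)⌋ : ℤ)) * (2 * (Real.pi : ℂ) * Complex.I) := by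
      rw [hθ, Int.fract]
      push_cast
      field_simp
      ring
    rw [key, Complex.exp_add, Complex.exp_int_mul_two_pi_mul_I, mul_one]
    have := Complex.norm_mul_exp_arg_mul_I u
    rw [← ht] at this
    rw [show (s:ℂ) = ((‖u‖ : ℝ) : ℂ) by rw [← hu]]
    exact this


lemma exists_balanced {ι : Type*} [DecidableEq ι] (a : ℝ) (ha : 0 ≤ a) (f : ι → ℝ)
    (s : Finset ι) (hf : ∀ i ∈ s, 0 ≤ f i ∧ f i ≤ a) :
    ∃ t ⊆ s, |(∑ i ∈ t, f i) - ∑ i ∈ s \ t, f i| ≤ a := by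
  induction s using Finset.induction_on with
  | empty => exact ⟨∅, Finset.Subset.refl _, by simpa using ha⟩
  | insert _ _ hx =>
    rename_i x s' ih
    obtain ⟨t, hts, hbd⟩ := ih (fun i hi => hf i (Finset.mem_insert_of_mem hi))
    have hxt : x ∉ t := fun h => hx (hts h)
    have hfx := hf x (Finset.mem_insert_self x s')
    set b := ∑ i ∈ t, f i
    set c := ∑ i ∈ s' \ t, f i
    rcases le_or_gt b c with hbc | hbc
    · refine ⟨insert x t, Finset.insert_subset_insert x hts, ?_⟩
      have h1 : ∑ i ∈ insert x t, f i = f x + b := Finset.sum_insert hxt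
      have h2 : insert x s' \ insert x t = s' \ t := by
        ext i
        simp only [Finset.mem_sdiff, Finset.mem_insert]
        constructor
        · rintro ⟨h3 | h3, h4⟩
          · subst h3; exact (h4 (Or.inl rfl)).elim
          · exact ⟨h3, fun h5 => h4 (Or.inr h5)⟩
        · rintro ⟨h3, h4⟩
          refine ⟨Or.inr h3, ?_⟩
          rintro (rfl | h5)
          · exact hx h3
          · exact h4 h5
      rw [h1, h2]
      rw [abs_le] at hbd ⊢
      constructor <;> [skip; skip] <;> cases hbd <;> cases hfx <;> linarith
    · refine ⟨t, hts.trans (Finset.subset_insert x s'), ?_⟩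
      have h2 : insert x s' \ t = insert x (s' \ t) := by
        ext i
        simp only [Finset.mem_sdiff, Finset.mem_insert]
        constructor
        · rintro ⟨h3 | h3, h4⟩
          · exact Or.inl h3
          · exact Or.inr ⟨h3, h4⟩
        · rintro (rfl | ⟨h3, h4⟩)
          · exact ⟨Or.inl rfl, hxt⟩
          · exact ⟨Or.inr h3, h4⟩
      have hxst : x ∉ s' \ t := fun h => hx (Finset.mem_sdiff.mp h).1
      rw [h2, Finset.sum_insert hxst]
      rw [abs_le] at hbd ⊢
      constructor <;> cases hbd <;> cases hfx <;> linarith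



/-- **Lemma 2.2 (elementary geometric lemma).**  If `0 < r_1 ≤ r_2 ≤ ⋯ ≤ r_N` (`N > 2`) and
`r_N ≤ r_1 + ⋯ + r_{N-1}`, then the sums `∑ r_n e^{-2πiθ_n}` with `θ_n ∈ [0,1)` fill out the
closed disk of radius `r_1 + ⋯ + r_N` centred at the origin. -/
theorem phases_fill_disk (N : ℕ) (hN : 2 < N) (r : Fin N → ℝ)
    (hpos : ∀ n, 0 < r n) (hmono : Monotone r)
    (hlast : r ⟨N - 1, by omega⟩ ≤
      ∑ n ∈ Finset.univ.filter (fun n : Fin N => (n : ℕ) < N - 1), r n) :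
    {z : ℂ | ∃ θ : Fin N → ℝ, (∀ n, θ n ∈ Set.Ico (0 : ℝ) 1) ∧
        z = ∑ n, (r n : ℂ) * Complex.exp (-(2 * (Real.pi : ℂ) * Complex.I * (θ n : ℂ)))} =
      {z : ℂ | ‖z‖ ≤ ∑ n, r n} := by
  have hNM : N - 1 < N := by omega
  set last : Fin N := ⟨N - 1, hNM⟩ with hlastdef
  have hlv : (last : ℕ) = N - 1 := rfl
  set sF : Finset (Fin N) := Finset.univ.filter (fun n : Fin N => (n : ℕ) < N - 1) with hsF
  set a : ℝ := r last with hadef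
  have ha : 0 < a := hpos last
  -- each element of sF is at most a
  have hub : ∀ i ∈ sF, 0 ≤ r i ∧ r i ≤ a := by
    intro i hi
    refine ⟨(hpos i).le, hmono ?_⟩
    rw [Fin.le_def]
    have : (i : ℕ) < N - 1 := by
      rw [hsF] at hi; simpa using hi
    rw [hlv]
    omega
  obtain ⟨t, hts, hbd⟩ := exists_balanced a ha.le r sF hub
  set b : ℝ := ∑ i ∈ t, r i with hbdef
  set c : ℝ := ∑ i ∈ sF \ t, r i with hcdef
  have hb0 : 0 ≤ b := Finset.sum_nonneg fun i _ => (hpos i).le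
  have hc0 : 0 ≤ c := Finset.sum_nonneg fun i _ => (hpos i).le
  have hbc_sum : b + c = ∑ i ∈ sF, r i := by
    rw [hbdef, hcdef, add_comm]
    exact Finset.sum_sdiff hts
  have ha_le : a ≤ b + c := by rw [hbc_sum]; exact hlast
  -- the filter of the complement is the singleton {last}
  have hcompl : Finset.univ.filter (fun n : Fin N => ¬ ((n : ℕ) < N - 1)) = {last} := by
    ext n
    simp only [Finset.mem_filter, Finset.mem_univ, true_and, Finset.mem_singleton]
    constructor
    · intro h
      have hn := n.isLt
      rw [hlastdef]
      exact Fin.ext (by rw [hlv]; omega)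
    · intro h
      rw [h, hlastdef]
      simp
  have hsplitR : ∀ (g : Fin N → ℂ), ∑ n, g n = (∑ n ∈ sF, g n) + g last := by
    intro g
    rw [← Finset.sum_filter_add_sum_filter_not Finset.univ (fun n : Fin N => (n : ℕ) < N - 1) g,
      hcompl, Finset.sum_singleton]
  have hRsum : ∑ n, r n = b + c + a := by
    rw [← Finset.sum_filter_add_sum_filter_not Finset.univ (fun n : Fin N => (n : ℕ) < N - 1) r,
      hcompl, Finset.sum_singleton, hbc_sum]
  ext z
  simp only [Set.mem_setOf_eq]
  constructor
  · rintro ⟨θ, hθ, rfl⟩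
    calc ‖∑ n, (r n : ℂ) * Complex.exp (-(2 * (Real.pi : ℂ) * Complex.I * (θ n : ℂ)))‖
        ≤ ∑ n, ‖(r n : ℂ) * Complex.exp (-(2 * (Real.pi : ℂ) * Complex.I * (θ n : ℂ)))‖ :=
          norm_sum_le _ _
      _ = ∑ n, r n := by
          refine Finset.sum_congr rfl fun n _ => ?_
          rw [norm_mul, Complex.norm_real, Real.norm_of_nonneg (hpos n).le]
          rw [show -(2 * (Real.pi : ℂ) * Complex.I * (θ n : ℂ))
              = ((-(2 * Real.pi * θ n) : ℝ) : ℂ) * Complex.I by push_cast; ring]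
          rw [Complex.norm_exp_ofReal_mul_I, mul_one]
  · intro hz
    set d := ‖z‖ with hd
    have hd0 : 0 ≤ d := norm_nonneg z
    have hdR : d ≤ b + c + a := by rw [← hRsum]; exact hz
    set s1 : ℝ := max |b - c| |a - d| with hs1
    have hs10 : 0 ≤ s1 := le_trans (abs_nonneg _) (le_max_left _ _)
    -- first application: circles of radius a and s1, target z
    obtain ⟨u, v, hu, hv, huv⟩ := two_circle a s1 ha.le hs10 z
      (by
        rw [abs_le]
        constructor
        · -- -(d) ≤ a - s1, i.e. s1 ≤ a + d
          have h1 : |b - c| ≤ a + d := le_trans hbd (by linarith)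
          have h2 : |a - d| ≤ a + d := by rw [abs_le]; constructor <;> linarith
          have := max_le h1 h2
          rw [← hs1] at this
          linarith
        · -- a - s1 ≤ d since s1 ≥ a - d
          have : a - d ≤ s1 := le_trans (le_abs_self _) (le_max_right _ _)
          linarith)
      (by
        have h3 : d - a ≤ |a - d| := by rw [abs_sub_comm]; exact le_abs_self _
        have h4 : |a - d| ≤ s1 := le_max_right _ _
        rw [← hd]; linarith)
    -- second application: circles of radius b and c, target v
    obtain ⟨p, q, hp, hq, hpq⟩ := two_circle b c hb0 hc0 v
      (by rw [hv]; exact le_max_left _ _)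
      (by
        rw [hv, hs1]
        apply max_le
        · linarith
        · rw [abs_le]; constructor <;> linarith)
    obtain ⟨θa, hθa, hθau⟩ := exists_theta a ha.le u hu
    obtain ⟨θb, hθb, hθbp⟩ := exists_theta b hb0 p hp
    obtain ⟨θc, hθc, hθcq⟩ := exists_theta c hc0 q hq
    refine ⟨fun n => if (n : ℕ) = N - 1 then θa else if n ∈ t then θb else θc, ?_, ?_⟩
    · intro n
      dsimp only
      split_ifs <;> assumption
    · set g : Fin N → ℂ := fun n => (r n : ℂ) * Complex.exp (-(2 * (Real.pi : ℂ) * Complex.I *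
        ((if (n : ℕ) = N - 1 then θa else if n ∈ t then θb else θc : ℝ) : ℂ))) with hg
    -- goal : z = ∑ n, g n
      have hglast : g last = u := by
        have hcond : ((last : ℕ)) = N - 1 := rfl
        rw [hg]
        simp only [if_pos hcond]
        exact hθau
      have hgt : ∑ n ∈ t, g n = p := by
        rw [← hθbp, hbdef, Complex.ofReal_sum, Finset.sum_mul]
        refine Finset.sum_congr rfl fun n hn => ?_
        have hn' : (n : ℕ) < N - 1 := by
          have := hts hn
          rw [hsF] at this; simpa using this
        rw [hg]
        simp only [if_neg (by omega : ¬ (n : ℕ) = N - 1), if_pos hn]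
      have hgc : ∑ n ∈ sF \ t, g n = q := by
        rw [← hθcq, hcdef, Complex.ofReal_sum, Finset.sum_mul]
        refine Finset.sum_congr rfl fun n hn => ?_
        obtain ⟨hns, hnt⟩ := Finset.mem_sdiff.mp hn
        have hn' : (n : ℕ) < N - 1 := by
          rw [hsF] at hns; simpa using hns
        rw [hg]
        simp only [if_neg (by omega : ¬ (n : ℕ) = N - 1), if_neg hnt]
      have hsums : ∑ n ∈ sF, g n = p + q := by
        rw [← Finset.sum_sdiff hts, hgt, hgc, add_comm]
      rw [hsplitR g, hsums, hglast, hpq, ← huv]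
      ring
end

section
/- Let b be a complex-valued function on the prime numbers, and suppose there are constants C > 0 and η > 0 such that |b(p)| ≤ C p^η for every prime p. Then there exists a choice of real numbers θ_p, one for each prime p, such that for every ξ > 0 one has |Σ_{p ≤ ξ} b(p) · exp(−2πi θ_p)| ≤ C ξ^η, where the sum is over all primes p ≤ ξ. -/
noncomputable def Sfun (b : ℕ → ℂ) : ℕ → ℂ
  | 0 => 0
  | n + 1 =>
      if (n + 1).Prime then
        Sfun b n - (if Sfun b n = 0 then 1 else Sfun b n / ‖Sfun b n‖) * (‖b (n + 1)‖ : ℝ)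
      else Sfun b n

lemma Sfun_norm_step (b : ℕ → ℂ) {n : ℕ} (hp : (n + 1).Prime) :
    ‖Sfun b (n + 1)‖ = |‖Sfun b n‖ - ‖b (n + 1)‖| := by
  rw [Sfun, if_pos hp]
  by_cases h : Sfun b n = 0
  · simp [h, abs_of_nonneg (norm_nonneg (b (n + 1)))]
  · rw [if_neg h]
    have hS : (0 : ℝ) < ‖Sfun b n‖ := norm_pos_iff.mpr h
    have : Sfun b n - Sfun b n / (‖Sfun b n‖ : ℂ) * (‖b (n + 1)‖ : ℝ)
        = Sfun b n * ((((‖Sfun b n‖ - ‖b (n + 1)‖) / ‖Sfun b n‖ : ℝ)) : ℂ) := by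
      have hne : ((‖Sfun b n‖ : ℝ) : ℂ) ≠ 0 := by
        exact_mod_cast ne_of_gt hS
      rw [Complex.ofReal_div, Complex.ofReal_sub]
      field_simp [hne]
    rw [this, norm_mul]
    rw [Complex.norm_real, Real.norm_eq_abs, abs_div, abs_of_pos hS]
    rw [← mul_div_assoc]
    exact mul_div_cancel_left₀ _ hS.ne'

lemma Sfun_term_norm (b : ℕ → ℂ) {n : ℕ} (hp : (n + 1).Prime) :
    ‖Sfun b (n + 1) - Sfun b n‖ = ‖b (n + 1)‖ := by
  rw [Sfun, if_pos hp]
  have : Sfun b n - (if Sfun b n = 0 then 1 else Sfun b n / ‖Sfun b n‖) * (‖b (n + 1)‖ : ℝ)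
      - Sfun b n = -((if Sfun b n = 0 then 1 else Sfun b n / ‖Sfun b n‖) * (‖b (n + 1)‖ : ℝ)) := by
    ring
  rw [this, norm_neg, norm_mul]
  have hone : ‖(if Sfun b n = 0 then 1 else Sfun b n / (‖Sfun b n‖ : ℂ))‖ = 1 := by
    by_cases h : Sfun b n = 0
    · simp [h]
    · rw [if_neg h, norm_div, Complex.norm_real, Real.norm_eq_abs,
        abs_of_pos (norm_pos_iff.mpr h), div_self (norm_pos_iff.mpr h).ne']
  rw [hone, one_mul, Complex.norm_real, Real.norm_eq_abs, abs_of_nonneg (norm_nonneg _)]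

lemma rot_exists (z w : ℂ) (h : ‖z‖ = ‖w‖) :
    ∃ θ : ℝ, z * Complex.exp (-(2 * (Real.pi : ℂ) * Complex.I * (θ : ℂ))) = w := by
  rcases eq_or_ne z 0 with hz | hz
  · refine ⟨0, ?_⟩
    have : w = 0 := by
      have := h.symm
      rw [hz, norm_zero] at this
      replace this := this.symm
      exact norm_eq_zero.mp this.symm
    simp [hz, this]
  · refine ⟨(z.arg - w.arg) / (2 * Real.pi), ?_⟩
    have hπ : (Real.pi : ℝ) ≠ 0 := Real.pi_ne_zero
    have harg : -(2 * (Real.pi : ℂ) * Complex.I * (((z.arg - w.arg) / (2 * Real.pi) : ℝ) : ℂ))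
        = ((w.arg : ℂ) - (z.arg : ℂ)) * Complex.I := by
      push_cast
      have h2π : (2 * (Real.pi : ℂ)) ≠ 0 := by
        simp [Complex.ofReal_ne_zero, hπ]
      field_simp
      ring
    rw [harg]
    have hz' := Complex.norm_mul_exp_arg_mul_I z
    have hw' := Complex.norm_mul_exp_arg_mul_I w
    calc z * Complex.exp (((w.arg : ℂ) - (z.arg : ℂ)) * Complex.I)
        = (‖z‖ : ℂ) * Complex.exp ((z.arg : ℂ) * Complex.I)
            * Complex.exp (((w.arg : ℂ) - (z.arg : ℂ)) * Complex.I) := by rw [hz']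
      _ = (‖z‖ : ℂ) * Complex.exp ((w.arg : ℂ) * Complex.I) := by
            rw [mul_assoc, ← Complex.exp_add]; ring_nf
      _ = (‖w‖ : ℂ) * Complex.exp ((w.arg : ℂ) * Complex.I) := by
            congr 1
            exact_mod_cast h
      _ = w := hw'

lemma Sfun_bound (b : ℕ → ℂ) (C η : ℝ) (hC : 0 < C) (hη : 0 < η)
    (hb : ∀ p : ℕ, p.Prime → ‖b p‖ ≤ C * (p : ℝ) ^ η) :
    ∀ n : ℕ, ‖Sfun b n‖ ≤ C * (n : ℝ) ^ η := by
  intro n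
  induction n with
  | zero => simp [Sfun, Real.zero_rpow hη.ne']
  | succ n ih =>
    have hmono : C * (n : ℝ) ^ η ≤ C * ((n + 1 : ℕ) : ℝ) ^ η := by
      apply mul_le_mul_of_nonneg_left _ hC.le
      apply Real.rpow_le_rpow (Nat.cast_nonneg n) _ hη.le
      exact_mod_cast Nat.le_succ n
    by_cases hp : (n + 1).Prime
    · rw [Sfun_norm_step b hp]
      have hb' := hb (n + 1) hp
      have h1 : ‖Sfun b n‖ ≤ C * ((n + 1 : ℕ) : ℝ) ^ η := ih.trans hmono
      rcases le_total ‖Sfun b n‖ ‖b (n + 1)‖ with hle | hle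
      · rw [abs_of_nonpos (by linarith)]
        have := norm_nonneg (Sfun b n)
        push_cast at hb' ⊢
        linarith
      · rw [abs_of_nonneg (by linarith)]
        have := norm_nonneg (b (n + 1))
        push_cast at h1 ⊢
        linarith
    · rw [Sfun, if_neg hp]
      exact ih.trans hmono

lemma Sfun_sum (b : ℕ → ℂ) (t : ℕ → ℂ)
    (ht : ∀ p, p.Prime → t p = Sfun b p - Sfun b (p - 1)) :
    ∀ n : ℕ, ∑ p ∈ (Finset.range (n + 1)).filter Nat.Prime, t p = Sfun b n := by
  intro n
  induction n with
  | zero =>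
    simp [Sfun, Finset.range_one, Finset.filter_singleton, Nat.not_prime_zero]
  | succ n ih =>
    rw [Finset.range_add_one, Finset.filter_insert]
    by_cases hp : (n + 1).Prime
    · rw [if_pos hp, Finset.sum_insert (by simp), ih, ht (n + 1) hp]
      simp only [Nat.add_sub_cancel]
      ring
    · rw [if_neg hp, ih, Sfun, if_neg hp]

/-- **Claim 3.2 (sign-balanced phases).**  If `|b(p)| ≤ C p^η` for all primes `p`, one may pick
phases `θ_p` such that `|∑_{p ≤ ξ} b(p) e^{-2πi θ_p}| ≤ C ξ^η` for every `ξ > 0`. -/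
theorem balanced_phases_exist (b : ℕ → ℂ) (C η : ℝ) (hC : 0 < C) (hη : 0 < η)
    (hb : ∀ p : ℕ, p.Prime → ‖b p‖ ≤ C * (p : ℝ) ^ η) :
    ∃ θ : ℕ → ℝ, ∀ ξ : ℝ, 0 < ξ →
      ‖∑ p ∈ (Finset.range (Nat.floor ξ + 1)).filter Nat.Prime,
          b p * Complex.exp (-(2 * (Real.pi : ℂ) * Complex.I * (θ p : ℂ)))‖ ≤ C * ξ ^ η := by
  have hnorm : ∀ p : ℕ, p.Prime → ‖b p‖ = ‖Sfun b p - Sfun b (p - 1)‖ := by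
    intro p hp
    obtain ⟨n, rfl⟩ : ∃ n, p = n + 1 := ⟨p - 1, (Nat.succ_pred_eq_of_pos hp.pos).symm⟩
    rw [Nat.add_sub_cancel, Sfun_term_norm b hp]
  choose θfun hθfun using fun (p : ℕ) (hp : p.Prime) =>
    rot_exists (b p) (Sfun b p - Sfun b (p - 1)) (hnorm p hp)
  refine ⟨fun p => if hp : p.Prime then θfun p hp else 0, fun ξ hξ => ?_⟩
  have hsum : ∑ p ∈ (Finset.range (Nat.floor ξ + 1)).filter Nat.Prime,
      b p * Complex.exp (-(2 * (Real.pi : ℂ) * Complex.I *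
        (((if hp : p.Prime then θfun p hp else 0) : ℝ) : ℂ))) = Sfun b (Nat.floor ξ) := by
    refine Sfun_sum b _ (fun p hp => ?_) (Nat.floor ξ)
    rw [dif_pos hp]
    exact hθfun p hp
  rw [hsum]
  calc ‖Sfun b (Nat.floor ξ)‖ ≤ C * ((Nat.floor ξ : ℕ) : ℝ) ^ η :=
        Sfun_bound b C η hC hη hb _
    _ ≤ C * ξ ^ η := by
        apply mul_le_mul_of_nonneg_left _ hC.le
        exact Real.rpow_le_rpow (Nat.cast_nonneg _) (Nat.floor_le hξ.le) hη.le
end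

section
/- Let (z_n)_{n≥1} be a sequence of complex numbers, and let (w_n)_{n≥1} be defined by the identity of formal power series exp(Σ_{n≥1} z_n X^n) = 1 + Σ_{n≥1} w_n X^n in ℂ[[X]]. Then for every n ≥ 1, |z_n| is at most the coefficient of X^n in the formal power series −log(1 − Σ_{m≥1} |w_m| X^m) = Σ_{k≥1} (1/k)(Σ_{m≥1} |w_m| X^m)^k, which has nonnegative real coefficients. -/
noncomputable section

/-- The exponential of a formal power series (intended for series with zero constant term):
the coefficient of `X^n` in `exp F = ∑_k F^k / k!` (only `k ≤ n` contribute when the constant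
term of `F` vanishes). -/
def PowerSeries.expOf {K : Type*} [Field K] (F : PowerSeries K) : PowerSeries K :=
  PowerSeries.mk fun n =>
    ∑ k ∈ Finset.range (n + 1), (k.factorial : K)⁻¹ * PowerSeries.coeff n (F ^ k)

section AuxSection
open PowerSeries Finset

namespace LogAux

variable {K : Type*} [Field K]

-- coeff of high power of ct-zero series vanishes
lemma coeff_pow_eq_zero {A : PowerSeries K} (hA : constantCoeff A = 0)
    {n k : ℕ} (h : n < k) : coeff n (A ^ k) = 0 := by
  have hx : (X : PowerSeries K) ^ k ∣ A ^ k :=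
    pow_dvd_pow_of_dvd (PowerSeries.X_dvd_iff.2 hA) k
  obtain ⟨c, hc⟩ := hx
  rw [hc, PowerSeries.coeff_X_pow_mul']
  simp [Nat.not_le.2 h]

-- constant coeff of positive power
lemma constantCoeff_pow_eq_zero {A : PowerSeries K} (hA : constantCoeff A = 0)
    {k : ℕ} (hk : 1 ≤ k) : coeff 0 (A ^ k) = 0 :=
  coeff_pow_eq_zero hA hk

end LogAux

namespace LogAux2
open LogAux

variable {K : Type*} [Field K]

-- locality: coeff n of a product depends only on coefficients ≤ n
lemma coeff_mul_congr {A A' B B' : PowerSeries K} {n : ℕ}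
    (hA : ∀ m ≤ n, coeff m A = coeff m A')
    (hB : ∀ m ≤ n, coeff m B = coeff m B') :
    coeff n (A * B) = coeff n (A' * B') := by
  rw [PowerSeries.coeff_mul, PowerSeries.coeff_mul]
  refine Finset.sum_congr rfl fun p hp => ?_
  rw [Finset.HasAntidiagonal.mem_antidiagonal] at hp
  rw [hA p.1 (by omega), hB p.2 (by omega)]

-- powers agree below n when coefficients agree below n
lemma coeff_pow_congr_lt {A B : PowerSeries K} {n : ℕ}
    (h : ∀ m < n, coeff m A = coeff m B) :
    ∀ k, ∀ m < n, coeff m (A ^ k) = coeff m (B ^ k) := by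
  intro k
  induction k with
  | zero => intro m _; simp
  | succ k ih =>
    intro m hm
    rw [pow_succ, pow_succ]
    exact coeff_mul_congr (fun a ha => ih a (lt_of_le_of_lt ha hm))
      (fun a ha => h a (lt_of_le_of_lt ha hm)) 

-- powers k ≥ 2 agree at n when coefficients agree below n and ct = 0
lemma coeff_pow_congr {A B : PowerSeries K} {n : ℕ}
    (hA : constantCoeff A = 0) (hB : constantCoeff B = 0)
    (h : ∀ m < n, coeff m A = coeff m B) {k : ℕ} (hk : 2 ≤ k) :
    coeff n (A ^ k) = coeff n (B ^ k) := by
  obtain ⟨j, rfl⟩ : ∃ j, k = j + 1 := ⟨k - 1, by omega⟩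
  rw [pow_succ, pow_succ, PowerSeries.coeff_mul, PowerSeries.coeff_mul]
  refine Finset.sum_congr rfl fun p hp => ?_
  rw [Finset.HasAntidiagonal.mem_antidiagonal] at hp
  rcases Nat.eq_zero_or_pos p.1 with h1 | h1
  · rw [h1, constantCoeff_pow_eq_zero hA (by omega), constantCoeff_pow_eq_zero hB (by omega),
      zero_mul, zero_mul]
  rcases Nat.eq_zero_or_pos p.2 with h2 | h2
  · rw [h2] at hp ⊢
    simp [PowerSeries.coeff_zero_eq_constantCoeff, hA, hB]
  rw [coeff_pow_congr_lt h j p.1 (by omega), h p.2 (by omega)]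

end LogAux2

namespace LogAux3
-- norm bound: coefficients of powers
lemma norm_coeff_pow_le {A : PowerSeries ℂ} {B : PowerSeries ℝ}
    (h : ∀ m, ‖PowerSeries.coeff m A‖ = PowerSeries.coeff m B) :
    ∀ k n, ‖PowerSeries.coeff n (A ^ k)‖ ≤ PowerSeries.coeff n (B ^ k) := by
  intro k
  induction k with
  | zero => intro n; simp [PowerSeries.coeff_one]; split <;> simp
  | succ k ih =>
    intro n
    rw [pow_succ, pow_succ, PowerSeries.coeff_mul, PowerSeries.coeff_mul]
    refine le_trans (norm_sum_le _ _) (Finset.sum_le_sum fun p _ => ?_)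
    rw [norm_mul, h p.2]
    exact mul_le_mul_of_nonneg_right (ih p.1) (by rw [← h p.2]; positivity)
end LogAux3

namespace LogAux4
open LogAux LogAux2 PowerSeries Finset

def EN (F : PowerSeries ℂ) (N : ℕ) : PowerSeries ℂ :=
  ∑ k ∈ Finset.range (N+1), ((k.factorial : ℂ)⁻¹) • F ^ k

def LN (W : PowerSeries ℂ) (N : ℕ) : PowerSeries ℂ :=
  ∑ k ∈ Finset.range N, ((-1 : ℂ) ^ (k + 2) * ((k:ℂ)+1)⁻¹) • W ^ (k + 1)

lemma deriv_EN (F : PowerSeries ℂ) (N : ℕ) :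
    d⁄dX ℂ (EN F (N+1)) = EN F N * d⁄dX ℂ F := by
  rw [EN, map_sum, Finset.sum_range_succ']
  have h : ∀ k : ℕ, d⁄dX ℂ ((((k+1).factorial : ℂ))⁻¹ • F ^ (k+1))
      = ((k.factorial : ℂ)⁻¹ • F ^ k) * d⁄dX ℂ F := by
    intro k
    rw [Derivation.map_smul, Derivation.leibniz_pow, Nat.add_sub_cancel,
      ← Nat.cast_smul_eq_nsmul ℂ, smul_smul]
    have : (((k+1).factorial : ℂ))⁻¹ * ((k+1 : ℕ) : ℂ) = (k.factorial : ℂ)⁻¹ := by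
      rw [Nat.factorial_succ]
      push_cast
      have h1 : ((k:ℂ) + 1) ≠ 0 := Nat.cast_add_one_ne_zero k
      have h2 : (k.factorial : ℂ) ≠ 0 := by exact_mod_cast Nat.factorial_ne_zero k
      field_simp
    rw [this, smul_eq_mul, smul_mul_assoc]
  simp only [h]
  simp [EN, Finset.sum_mul]

lemma deriv_LN (W : PowerSeries ℂ) (N : ℕ) :
    d⁄dX ℂ (LN W N) = (∑ j ∈ Finset.range N, (-W) ^ j) * d⁄dX ℂ W := by
  rw [LN, map_sum, Finset.sum_mul]
  refine Finset.sum_congr rfl fun k _ => ?_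
  rw [Derivation.map_smul, Derivation.leibniz_pow, Nat.add_sub_cancel,
    ← Nat.cast_smul_eq_nsmul ℂ, smul_smul]
  push_cast
  have h1 : ((k:ℂ) + 1) ≠ 0 := Nat.cast_add_one_ne_zero k
  have : (-1 : ℂ) ^ (k+2) * ((k:ℂ)+1)⁻¹ * ((k:ℂ)+1) = (-1 : ℂ) ^ k := by
    field_simp
    ring
  push_cast at this ⊢
  rw [this]
  have hnw : (-W) ^ k = (-1 : PowerSeries ℂ) ^ k * W ^ k := by
    rw [neg_pow W k]
  rw [hnw, PowerSeries.smul_eq_C_mul]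
  have hc : (PowerSeries.C) ((-1 : ℂ) ^ k) = (-1 : PowerSeries ℂ) ^ k := by
    rw [map_pow, map_neg, map_one]
  rw [hc, mul_assoc, smul_eq_mul]

lemma onepW_mul_deriv_LN (W : PowerSeries ℂ) (N : ℕ) :
    (1 + W) * d⁄dX ℂ (LN W N) = (1 - (-W) ^ N) * d⁄dX ℂ W := by
  rw [deriv_LN, ← mul_assoc]
  congr 1
  have := geom_sum_mul (-W) N
  have h2 : (1 + W) * ∑ j ∈ Finset.range N, (-W) ^ j
      = -((∑ j ∈ Finset.range N, (-W) ^ j) * (-W - 1)) := by ring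
  rw [h2, this]
  ring

end LogAux4

namespace LogAux5
open LogAux LogAux2 LogAux4 PowerSeries Finset

def Lg (W : PowerSeries ℂ) : PowerSeries ℂ :=
  PowerSeries.mk fun n => if n = 0 then 0 else
    ∑ k ∈ Finset.Icc 1 n, ((-1 : ℂ) ^ (k + 1) * (k : ℂ)⁻¹) * coeff n (W ^ k)

lemma ct_Lg (W : PowerSeries ℂ) : constantCoeff (Lg W) = 0 := by
  rw [← coeff_zero_eq_constantCoeff_apply, Lg, coeff_mk, if_pos rfl]

lemma coeff_Lg (W : PowerSeries ℂ) (hW : constantCoeff W = 0) {n N : ℕ} (hn : n ≤ N) :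
    coeff n (Lg W) = coeff n (LN W N) := by
  rw [LN, map_sum]
  simp only [PowerSeries.coeff_smul, smul_eq_mul]
  rcases Nat.eq_zero_or_pos n with rfl | hpos
  · rw [coeff_zero_eq_constantCoeff_apply, ct_Lg]
    refine (Finset.sum_eq_zero fun k _ => ?_).symm
    rw [coeff_pow_eq_zero hW (Nat.succ_pos k), mul_zero]
  · rw [Lg, coeff_mk, if_neg (by omega)]
    rw [← Finset.Ico_add_one_right_eq_Icc, Finset.sum_Ico_eq_sum_range]
    have hsub : Finset.range (n + 1 - 1) ⊆ Finset.range N := by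
      intro x hx; simp only [Finset.mem_range] at *; omega
    rw [← Finset.sum_subset hsub (fun x _ hx => by
      rw [coeff_pow_eq_zero hW (by simp only [Finset.mem_range] at hx ⊢; omega), mul_zero])]
    refine Finset.sum_congr rfl fun k _ => ?_
    push_cast
    ring_nf

lemma coeff_expOf (F : PowerSeries ℂ) (hF : constantCoeff F = 0) {n N : ℕ} (hn : n ≤ N) :
    coeff n (F.expOf) = coeff n (EN F N) := by
  rw [PowerSeries.expOf, coeff_mk, EN, map_sum]
  simp only [PowerSeries.coeff_smul, smul_eq_mul]
  refine Finset.sum_subset (fun x hx => by simp only [Finset.mem_range] at *; omega)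
    (fun x _ hx => ?_)
  simp only [Finset.mem_range] at hx
  rw [coeff_pow_eq_zero hF (by omega), mul_zero]

end LogAux5

namespace LogAux6
open LogAux LogAux2 LogAux4 LogAux5 PowerSeries Finset

lemma coeff_pow_mul_zero {A W : PowerSeries ℂ} (hW : constantCoeff W = 0) {n N : ℕ}
    (h : n < N) : coeff n (W ^ N * A) = 0 := by
  have hx : (X : PowerSeries ℂ) ^ N ∣ W ^ N * A :=
    dvd_mul_of_dvd_left (pow_dvd_pow_of_dvd (PowerSeries.X_dvd_iff.2 hW) N) A
  obtain ⟨c, hc⟩ := hx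
  rw [hc, PowerSeries.coeff_X_pow_mul']
  simp [Nat.not_le.2 h]

lemma ode (W : PowerSeries ℂ) (hW : constantCoeff W = 0) :
    (1 + W) * d⁄dX ℂ (PowerSeries.expOf (Lg W)) =
      d⁄dX ℂ W * PowerSeries.expOf (Lg W) := by
  set L := Lg W with hL
  set E := PowerSeries.expOf L with hE
  ext n
  -- replace E's derivative by that of the truncation EN L (n+1)
  have hcoeffE : ∀ m ≤ n, coeff m (d⁄dX ℂ E) = coeff m (d⁄dX ℂ (EN L (n+1))) := by
    intro m hm
    rw [PowerSeries.coeff_derivative, PowerSeries.coeff_derivative,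
      coeff_expOf L (ct_Lg W) (by omega : m + 1 ≤ n + 1)]
  have hcoeffL : ∀ m ≤ n, coeff m (d⁄dX ℂ L) = coeff m (d⁄dX ℂ (LN W (n+1))) := by
    intro m hm
    rw [PowerSeries.coeff_derivative, PowerSeries.coeff_derivative,
      coeff_Lg W hW (by omega : m + 1 ≤ n + 1)]
  have step1 : coeff n ((1 + W) * d⁄dX ℂ E)
      = coeff n ((1 + W) * d⁄dX ℂ (EN L (n+1))) :=
    coeff_mul_congr (fun m _ => rfl) hcoeffE
  rw [step1, deriv_EN]
  have step2 : coeff n ((1 + W) * (EN L n * d⁄dX ℂ L))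
      = coeff n ((1 + W) * (EN L n * d⁄dX ℂ (LN W (n+1)))) :=
    coeff_mul_congr (fun m _ => rfl)
      (fun m hm => coeff_mul_congr (fun a _ => rfl)
        (fun a ha => hcoeffL a (le_trans ha hm)))
  rw [step2]
  have step3 : (1 + W) * (EN L n * d⁄dX ℂ (LN W (n+1)))
      = (1 - (-W) ^ (n+1)) * d⁄dX ℂ W * EN L n := by
    rw [← mul_assoc, mul_comm (1 + W) (EN L n), mul_assoc, onepW_mul_deriv_LN]
    ring
  rw [step3]
  have step4 : coeff n ((1 - (-W) ^ (n+1)) * d⁄dX ℂ W * EN L n)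
      = coeff n (d⁄dX ℂ W * EN L n) := by
    have expand : (1 - (-W) ^ (n+1)) * d⁄dX ℂ W * EN L n
        = d⁄dX ℂ W * EN L n - (-1 : PowerSeries ℂ) ^ (n+1) *
            (W ^ (n+1) * (d⁄dX ℂ W * EN L n)) := by
      rw [neg_pow W (n+1)]; ring
    rw [expand, map_sub]
    have : coeff n ((-1 : PowerSeries ℂ) ^ (n+1) *
        (W ^ (n+1) * (d⁄dX ℂ W * EN L n))) = 0 := by
      rcases Nat.even_or_odd (n+1) with he | ho
      · rw [he.neg_one_pow, one_mul, coeff_pow_mul_zero hW (by omega)]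
      · rw [ho.neg_one_pow, neg_one_mul, map_neg, coeff_pow_mul_zero hW (by omega), neg_zero]
    rw [this, sub_zero]
  rw [step4]
  exact coeff_mul_congr (fun m _ => rfl)
    (fun m hm => (coeff_expOf L (ct_Lg W) (le_trans hm (le_refl n))).symm)

lemma ode_unique {W F : PowerSeries ℂ} (hW : constantCoeff W = 0)
    (h : (1 + W) * d⁄dX ℂ F = d⁄dX ℂ W * F) :
    F = PowerSeries.C (constantCoeff F) * (1 + W) := by
  have hu : constantCoeff (1 + W) ≠ 0 := by
    rw [map_add, hW, map_one, add_zero]; exact one_ne_zero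
  have hmul : (1 + W) * (1 + W)⁻¹ = 1 := PowerSeries.mul_inv_cancel _ hu
  have hmul' : (1 + W)⁻¹ * (1 + W) = 1 := PowerSeries.inv_mul_cancel _ hu
  set G := F * (1 + W)⁻¹ with hG
  have hdW : d⁄dX ℂ (1 + W) = d⁄dX ℂ W := by
    rw [map_add, Derivation.map_one_eq_zero, zero_add]
  have hdG : d⁄dX ℂ G = 0 := by
    rw [hG, Derivation.leibniz, PowerSeries.derivative_inv' , hdW, smul_eq_mul, smul_eq_mul]
    have hdF : d⁄dX ℂ F = (1 + W)⁻¹ * (d⁄dX ℂ W * F) := by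
      calc d⁄dX ℂ F = ((1 + W)⁻¹ * (1 + W)) * d⁄dX ℂ F := by rw [hmul', one_mul]
      _ = (1 + W)⁻¹ * ((1 + W) * d⁄dX ℂ F) := by ring
      _ = (1 + W)⁻¹ * (d⁄dX ℂ W * F) := by rw [h]
    rw [hdF]
    ring
  have hGc : G = PowerSeries.C (constantCoeff G) := by
    apply PowerSeries.derivative.ext
    · rw [hdG, PowerSeries.derivative_C]
    · simp
  have hctG : constantCoeff G = constantCoeff F := by
    rw [hG, map_mul, PowerSeries.constantCoeff_inv, map_add, hW, map_one, add_zero,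
      inv_one, mul_one]
  calc F = G * (1 + W) := by rw [hG, mul_assoc, hmul', mul_one]
  _ = PowerSeries.C (constantCoeff G) * (1 + W) := by rw [← hGc]
  _ = PowerSeries.C (constantCoeff F) * (1 + W) := by rw [hctG]

lemma expOf_Lg (W : PowerSeries ℂ) (hW : constantCoeff W = 0) :
    PowerSeries.expOf (Lg W) = 1 + W := by
  have h := ode_unique hW (ode W hW)
  have hct : constantCoeff (PowerSeries.expOf (Lg W)) = 1 := by
    rw [← coeff_zero_eq_constantCoeff_apply, PowerSeries.expOf, coeff_mk]
    simp
  rw [h, hct, map_one, one_mul]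

end LogAux6

namespace LogAux7
open LogAux LogAux2 LogAux4 LogAux5 LogAux6 PowerSeries Finset

lemma expOf_inj {A B : PowerSeries ℂ} (hA : constantCoeff A = 0)
    (hB : constantCoeff B = 0) (h : PowerSeries.expOf A = PowerSeries.expOf B) :
    A = B := by
  ext n
  induction n using Nat.strong_induction_on with
  | _ n ih =>
  rcases Nat.eq_zero_or_pos n with rfl | hn
  · rw [coeff_zero_eq_constantCoeff_apply, coeff_zero_eq_constantCoeff_apply, hA, hB]
  have key : ∀ F : PowerSeries ℂ, coeff n (PowerSeries.expOf F)
      = coeff n F + ∑ k ∈ Finset.range (n+1),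
          (if k = 1 then 0 else (k.factorial : ℂ)⁻¹ * coeff n (F ^ k)) := by
    intro F
    rw [PowerSeries.expOf, coeff_mk]
    have : ∀ k ∈ Finset.range (n+1), (k.factorial : ℂ)⁻¹ * coeff n (F ^ k)
        = (if k = 1 then coeff n F else 0)
          + (if k = 1 then 0 else (k.factorial : ℂ)⁻¹ * coeff n (F ^ k)) := by
      intro k _
      by_cases hk : k = 1 <;> simp [hk]
    rw [Finset.sum_congr rfl this, Finset.sum_add_distrib, Finset.sum_ite_eq']
    simp [Finset.mem_range, hn, Nat.lt_succ_of_le hn]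
  have hc := congrArg (coeff n) h
  rw [key A, key B] at hc
  have hrest : ∑ k ∈ Finset.range (n+1),
        (if k = 1 then 0 else (k.factorial : ℂ)⁻¹ * coeff n (A ^ k))
      = ∑ k ∈ Finset.range (n+1),
        (if k = 1 then 0 else (k.factorial : ℂ)⁻¹ * coeff n (B ^ k)) := by
    refine Finset.sum_congr rfl fun k _ => ?_
    rcases Nat.lt_or_ge k 2 with hk | hk
    · interval_cases k
      · simp [PowerSeries.coeff_one, (by omega : ¬ n = 0)]
      · simp
    · rw [if_neg (by omega), if_neg (by omega),
        coeff_pow_congr hA hB (fun m hm => ih m hm) hk]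
  rw [hrest] at hc
  exact add_right_cancel hc

end LogAux7


end AuxSection


/-- **Lemma 3.6 (i).**  If `1 + ∑ w_n X^n = exp (∑ z_n X^n)` in `ℂ[[X]]`, then `|z_n|` is
bounded by the `n`-th coefficient of `-log (1 - ∑ |w_m| X^m) = ∑_{k ≥ 1} (1/k)(∑ |w_m| X^m)^k`. -/
theorem log_coeff_bound (z w : ℕ → ℂ)
    (hw : (1 : PowerSeries ℂ) + PowerSeries.mk (fun n => if n = 0 then 0 else w n) =
      PowerSeries.expOf (PowerSeries.mk fun n => if n = 0 then 0 else z n)) :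
    ∀ n : ℕ, 1 ≤ n →
      ‖z n‖ ≤ ∑ k ∈ Finset.Icc 1 n, (k : ℝ)⁻¹ *
        PowerSeries.coeff n
          ((PowerSeries.mk fun m => if m = 0 then 0 else ‖w m‖ : PowerSeries ℝ) ^ k) := by
  intro n hn
  set Wc : PowerSeries ℂ := PowerSeries.mk fun n => if n = 0 then 0 else w n with hWc
  set Z : PowerSeries ℂ := PowerSeries.mk fun n => if n = 0 then 0 else z n with hZ
  set Wr : PowerSeries ℝ := PowerSeries.mk fun m => if m = 0 then 0 else ‖w m‖ with hWr
  have hctW : PowerSeries.constantCoeff Wc = 0 := by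
    rw [← PowerSeries.coeff_zero_eq_constantCoeff_apply, hWc, PowerSeries.coeff_mk, if_pos rfl]
  have hctZ : PowerSeries.constantCoeff Z = 0 := by
    rw [← PowerSeries.coeff_zero_eq_constantCoeff_apply, hZ, PowerSeries.coeff_mk, if_pos rfl]
  have hZL : Z = LogAux5.Lg Wc := by
    refine LogAux7.expOf_inj hctZ (LogAux5.ct_Lg Wc) ?_
    rw [LogAux6.expOf_Lg Wc hctW, hw]
  have hzn : z n = ∑ k ∈ Finset.Icc 1 n,
      ((-1 : ℂ) ^ (k + 1) * (k : ℂ)⁻¹) * PowerSeries.coeff n (Wc ^ k) := by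
    have := congrArg (PowerSeries.coeff n) hZL
    rwa [hZ, PowerSeries.coeff_mk, if_neg (by omega), LogAux5.Lg, PowerSeries.coeff_mk,
      if_neg (by omega)] at this
  have hnorm : ∀ m, ‖PowerSeries.coeff m Wc‖ = PowerSeries.coeff m Wr := by
    intro m
    rw [hWc, hWr, PowerSeries.coeff_mk, PowerSeries.coeff_mk]
    by_cases hm : m = 0 <;> simp [hm]
  calc ‖z n‖ = ‖∑ k ∈ Finset.Icc 1 n,
      ((-1 : ℂ) ^ (k + 1) * (k : ℂ)⁻¹) * PowerSeries.coeff n (Wc ^ k)‖ := by rw [hzn]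
  _ ≤ ∑ k ∈ Finset.Icc 1 n,
      ‖((-1 : ℂ) ^ (k + 1) * (k : ℂ)⁻¹) * PowerSeries.coeff n (Wc ^ k)‖ :=
    norm_sum_le _ _
  _ ≤ ∑ k ∈ Finset.Icc 1 n, (k : ℝ)⁻¹ * PowerSeries.coeff n (Wr ^ k) := by
    refine Finset.sum_le_sum fun k _ => ?_
    rw [norm_mul, norm_mul, norm_pow, norm_neg, norm_one, one_pow, one_mul, norm_inv]
    have h1 : ‖(k : ℂ)‖ = (k : ℝ) := by
      simp
    rw [h1]
    exact mul_le_mul_of_nonneg_left (LogAux3.norm_coeff_pow_le hnorm k n)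
      (inv_nonneg.mpr (Nat.cast_nonneg k))

end
end

section
/- For n ≥ 1 let F_n ∈ ℂ[Z_1, …, Z_n] be the polynomials defined by exp(Σ_{n≥1} Z_n X^n) = 1 + Σ_{n≥1} F_n(Z_1,…,Z_n) X^n as formal power series in X. Let N ≥ 2 be an integer. Then there is a constant C_N depending only on N such that for every α = (α_1, …, α_{N−1}) ∈ ℂ^{N−1}, Σ_{n=1}^{N−1} |α_n| ≤ C_N · (1 + Σ_{n=1}^{N−1} |F_n(α_1,…,α_n)|)^{N−1}. -/
noncomputable section

/-- `F_n(α_1, …, α_n)`: the coefficient of `X^n` in `exp (∑_{m ≥ 1} α_m X^m)`. -/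
def Fval (n : ℕ) (α : ℕ → ℂ) : ℂ :=
  PowerSeries.coeff n (PowerSeries.expOf (PowerSeries.mk fun m => if m = 0 then 0 else α m))

namespace NormLeExpCoeffAux

open PowerSeries Finset

variable (α : ℕ → ℂ)

/-- The series `A = ∑_{m ≥ 1} α_m X^m`. -/
def Aser : PowerSeries ℂ := PowerSeries.mk fun m => if m = 0 then 0 else α m

lemma coeff_Apow_zero {k n : ℕ} (h : n < k) : coeff n (Aser α ^ k) = 0 := by
  have hX : (X : PowerSeries ℂ) ∣ Aser α := by
    rw [PowerSeries.X_dvd_iff]; simp [Aser]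
  exact (PowerSeries.X_pow_dvd_iff.mp (pow_dvd_pow_of_dvd hX k)) n h

lemma Fval_eq_sum (n M : ℕ) (hn : n ≤ M) :
    Fval n α = ∑ k ∈ range (M + 1), (k.factorial : ℂ)⁻¹ * coeff n (Aser α ^ k) := by
  have h1 : Fval n α = ∑ k ∈ range (n + 1), (k.factorial : ℂ)⁻¹ * coeff n (Aser α ^ k) := by
    simp [Fval, PowerSeries.expOf, Aser, PowerSeries.coeff_mk]
  rw [h1]
  refine Finset.sum_subset (Finset.range_subset_range.mpr (by omega)) ?_
  intro k hk hk'
  have : n < k := by simp [Finset.mem_range] at hk hk'; omega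
  rw [coeff_Apow_zero α this, mul_zero]

lemma Fval_zero : Fval 0 α = 1 := by
  simp [Fval, PowerSeries.expOf, PowerSeries.coeff_mk]

lemma Fval_rec (n : ℕ) :
    ((n + 1 : ℕ) : ℂ) * Fval (n + 1) α =
      ∑ m ∈ Finset.Icc 1 (n + 1), (m : ℂ) * α m * Fval (n + 1 - m) α := by
  have hD : ∀ k : ℕ, coeff n (d⁄dX ℂ (Aser α ^ k)) =
      (k : ℂ) * coeff n (Aser α ^ (k - 1) * d⁄dX ℂ (Aser α)) := by
    intro k
    rw [Derivation.leibniz_pow, map_nsmul, nsmul_eq_mul, smul_eq_mul]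
  have step1 : ((n + 1 : ℕ) : ℂ) * Fval (n + 1) α =
      ∑ k ∈ range (n + 2), (k.factorial : ℂ)⁻¹ * coeff n (d⁄dX ℂ (Aser α ^ k)) := by
    rw [Fval_eq_sum α (n + 1) (n + 1) le_rfl, Finset.mul_sum]
    refine Finset.sum_congr rfl fun k _ => ?_
    rw [PowerSeries.coeff_derivative]
    push_cast
    ring
  rw [step1]
  have step2 : ∑ k ∈ range (n + 2), (k.factorial : ℂ)⁻¹ * coeff n (d⁄dX ℂ (Aser α ^ k)) =
      ∑ k ∈ range (n + 1), (k.factorial : ℂ)⁻¹ * coeff n (Aser α ^ k * d⁄dX ℂ (Aser α)) := by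
    rw [Finset.sum_range_succ']
    simp only [hD]
    simp only [Nat.cast_zero, zero_mul, mul_zero, add_zero, Nat.add_sub_cancel]
    refine Finset.sum_congr rfl fun k _ => ?_
    have h1 : ((k + 1 : ℕ) : ℂ) ≠ 0 := Nat.cast_ne_zero.mpr (Nat.succ_ne_zero k)
    have key : (((k + 1).factorial : ℕ) : ℂ)⁻¹ * ((k + 1 : ℕ) : ℂ) = (k.factorial : ℂ)⁻¹ := by
      rw [Nat.factorial_succ, Nat.cast_mul, mul_inv, mul_right_comm, inv_mul_cancel₀ h1, one_mul]
    rw [← mul_assoc, key]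
  rw [step2]
  have step3 : ∑ k ∈ range (n + 1), (k.factorial : ℂ)⁻¹ * coeff n (Aser α ^ k * d⁄dX ℂ (Aser α)) =
      ∑ p ∈ Finset.HasAntidiagonal.antidiagonal n, Fval p.1 α * coeff p.2 (d⁄dX ℂ (Aser α)) := by
    simp only [PowerSeries.coeff_mul, Finset.mul_sum]
    rw [Finset.sum_comm]
    refine Finset.sum_congr rfl fun p hp => ?_
    have hp1 : p.1 ≤ n := by
      rw [Finset.HasAntidiagonal.mem_antidiagonal] at hp; omega
    rw [Fval_eq_sum α p.1 n hp1, Finset.sum_mul]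
    refine Finset.sum_congr rfl fun k _ => by ring
  rw [step3]
  have hcA : ∀ j : ℕ, coeff j (d⁄dX ℂ (Aser α)) = α (j + 1) * ((j + 1 : ℕ) : ℂ) := by
    intro j
    rw [PowerSeries.coeff_derivative]
    simp [Aser]
  rw [Finset.Nat.sum_antidiagonal_eq_sum_range_succ
    (f := fun i j => Fval i α * coeff j (d⁄dX ℂ (Aser α)))]
  rw [← Finset.sum_range_reflect]
  rw [← Finset.Ico_add_one_right_eq_Icc, Finset.sum_Ico_eq_sum_range]
  refine Finset.sum_congr (by norm_num) fun j hj => ?_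
  have hj' : j < n + 1 := by simpa using hj
  have e1 : n + 1 - 1 - j = n - j := by omega
  have e2 : n - (n - j) = j := by omega
  have e3 : n + 1 - (1 + j) = n - j := by omega
  have e4 : 1 + j = j + 1 := by omega
  simp only [e1, e2, e3, e4, hcA]
  push_cast
  ring

/-- α_n in terms of F-values. -/
lemma alpha_eq (n : ℕ) (hn : 1 ≤ n) :
    (n : ℂ) * α n = (n : ℂ) * Fval n α -
      ∑ m ∈ Finset.Icc 1 (n - 1), (m : ℂ) * α m * Fval (n - m) α := by
  obtain ⟨j, rfl⟩ : ∃ j, n = j + 1 := ⟨n - 1, by omega⟩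
  have h := Fval_rec α j
  rw [Finset.sum_Icc_succ_top (by omega : 1 ≤ j + 1)] at h
  simp only [Nat.sub_self, Fval_zero, mul_one, Nat.add_sub_cancel] at h ⊢
  linear_combination -h

lemma geo_sum (n : ℕ) : ∑ m ∈ Finset.Icc 1 n, (2 : ℝ) ^ m = 2 ^ (n + 1) - 2 := by
  induction n with
  | zero => simp
  | succ k ih =>
    rw [Finset.sum_Icc_succ_top (by omega : 1 ≤ k + 1), ih]
    ring

end NormLeExpCoeffAux

set_option maxHeartbeats 1000000 in
open NormLeExpCoeffAux Finset in
/-- **Lemma 3.7 (i).**  `∑_{n=1}^{N-1} |α_n| ≤ C_N (1 + ∑_{n=1}^{N-1} |F_n(α_1,…,α_n)|)^{N-1}`. -/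
theorem norm_le_of_exp_coeff (N : ℕ) (hN : 2 ≤ N) :
    ∃ C : ℝ, 0 < C ∧ ∀ α : ℕ → ℂ,
      (∑ n ∈ Finset.Icc 1 (N - 1), ‖α n‖) ≤
        C * (1 + ∑ n ∈ Finset.Icc 1 (N - 1), ‖Fval n α‖) ^ (N - 1) := by
  refine ⟨2 ^ N, by positivity, fun α => ?_⟩
  set S : ℝ := 1 + ∑ n ∈ Finset.Icc 1 (N - 1), ‖Fval n α‖ with hSdef
  have hsum_nonneg : (0 : ℝ) ≤ ∑ n ∈ Finset.Icc 1 (N - 1), ‖Fval n α‖ :=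
    Finset.sum_nonneg fun _ _ => norm_nonneg _
  have hS1 : (1 : ℝ) ≤ S := by simp only [hSdef]; linarith
  have hS0 : (0 : ℝ) < S := lt_of_lt_of_le one_pos hS1
  have hSpw : ∀ k : ℕ, (0 : ℝ) ≤ S ^ k := fun k => pow_nonneg hS0.le k
  have hF_le : ∀ j : ℕ, 1 ≤ j → j ≤ N - 1 → ‖Fval j α‖ ≤ S := by
    intro j h1 h2
    have : ‖Fval j α‖ ≤ ∑ n ∈ Finset.Icc 1 (N - 1), ‖Fval n α‖ :=
      Finset.single_le_sum (f := fun n => ‖Fval n α‖) (fun _ _ => norm_nonneg _)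
        (Finset.mem_Icc.mpr ⟨h1, h2⟩)
    simp only [hSdef]; linarith
  -- key inductive bound
  have key : ∀ n : ℕ, 1 ≤ n → n ≤ N - 1 → ‖α n‖ ≤ ((2 : ℝ) ^ n - 1) * S ^ n := by
    intro n
    induction n using Nat.strong_induction_on with
    | _ n ih =>
      intro h1 h2
      have hn0 : (0 : ℝ) < (n : ℝ) := by exact_mod_cast h1
      have hmain : (n : ℝ) * ‖α n‖ ≤ (n : ℝ) * (((2 : ℝ) ^ n - 1) * S ^ n) := by
        have e := alpha_eq α n h1
        have h3 : (n : ℝ) * ‖α n‖ = ‖(n : ℂ) * α n‖ := by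
          rw [norm_mul, Complex.norm_natCast]
        rw [h3, e]
        have step : ‖(n : ℂ) * Fval n α - ∑ m ∈ Finset.Icc 1 (n - 1), (m : ℂ) * α m * Fval (n - m) α‖ ≤
            (n : ℝ) * ‖Fval n α‖ + ∑ m ∈ Finset.Icc 1 (n - 1), (m : ℝ) * ‖α m‖ * ‖Fval (n - m) α‖ := by
          refine (norm_sub_le _ _).trans ?_
          gcongr
          · rw [norm_mul, Complex.norm_natCast]
          · refine (norm_sum_le _ _).trans ?_
            refine Finset.sum_le_sum fun m _ => ?_
            rw [norm_mul, norm_mul, Complex.norm_natCast]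
        refine step.trans ?_
        have hterm : ∀ m ∈ Finset.Icc 1 (n - 1),
            (m : ℝ) * ‖α m‖ * ‖Fval (n - m) α‖ ≤ (n : ℝ) * ((2 : ℝ) ^ m * S ^ n) := by
          intro m hm
          rw [Finset.mem_Icc] at hm
          have hm1 : 1 ≤ m := hm.1
          have hmn : m ≤ n - 1 := hm.2
          have hmN : m ≤ N - 1 := by omega
          have hml : m < n := by omega
          have hα : ‖α m‖ ≤ ((2 : ℝ) ^ m - 1) * S ^ m := ih m hml hm1 hmN
          have hF : ‖Fval (n - m) α‖ ≤ S := hF_le (n - m) (by omega) (by omega)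
          have hSm : S ^ m * S ≤ S ^ n := by
            rw [← pow_succ]
            exact pow_le_pow_right₀ hS1 (by omega)
          have h2m1 : (1 : ℝ) ≤ 2 ^ m := one_le_pow₀ (by norm_num)
          have hb2 : ‖α m‖ * ‖Fval (n - m) α‖ ≤ (((2 : ℝ) ^ m - 1) * S ^ m) * S :=
            mul_le_mul hα hF (norm_nonneg _)
              (mul_nonneg (by linarith) (hSpw m))
          have hb3 : (((2 : ℝ) ^ m - 1) * S ^ m) * S ≤ (2 : ℝ) ^ m * S ^ n := by
            have h1' : (((2 : ℝ) ^ m - 1) * S ^ m) * S = ((2 : ℝ) ^ m - 1) * (S ^ m * S) := by ring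
            rw [h1']
            have h2' : ((2 : ℝ) ^ m - 1) * (S ^ m * S) ≤ ((2 : ℝ) ^ m - 1) * S ^ n :=
              mul_le_mul_of_nonneg_left hSm (by linarith)
            have h3' : ((2 : ℝ) ^ m - 1) * S ^ n ≤ (2 : ℝ) ^ m * S ^ n :=
              mul_le_mul_of_nonneg_right (by linarith) (hSpw n)
            linarith
          calc (m : ℝ) * ‖α m‖ * ‖Fval (n - m) α‖
              = (m : ℝ) * (‖α m‖ * ‖Fval (n - m) α‖) := by ring
            _ ≤ (n : ℝ) * ((((2 : ℝ) ^ m - 1) * S ^ m) * S) := by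
                refine mul_le_mul (by exact_mod_cast hml.le) hb2
                  (mul_nonneg (norm_nonneg _) (norm_nonneg _)) (Nat.cast_nonneg n)
            _ ≤ (n : ℝ) * ((2 : ℝ) ^ m * S ^ n) :=
                mul_le_mul_of_nonneg_left hb3 (Nat.cast_nonneg n)
        have hFn : ‖Fval n α‖ ≤ S ^ n := by
          refine (hF_le n h1 h2).trans ?_
          calc S = S ^ 1 := (pow_one S).symm
            _ ≤ S ^ n := pow_le_pow_right₀ hS1 h1
        have hsum2 : ∑ m ∈ Finset.Icc 1 (n - 1), (m : ℝ) * ‖α m‖ * ‖Fval (n - m) α‖ ≤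
            (n : ℝ) * ((2 : ℝ) ^ n - 2) * S ^ n := by
          refine (Finset.sum_le_sum hterm).trans ?_
          rw [← Finset.mul_sum, ← Finset.sum_mul, geo_sum (n - 1)]
          have : n - 1 + 1 = n := by omega
          rw [this]
          ring_nf
          exact le_refl _
        calc (n : ℝ) * ‖Fval n α‖ + ∑ m ∈ Finset.Icc 1 (n - 1), (m : ℝ) * ‖α m‖ * ‖Fval (n - m) α‖
            ≤ (n : ℝ) * S ^ n + (n : ℝ) * ((2 : ℝ) ^ n - 2) * S ^ n :=
              add_le_add (mul_le_mul_of_nonneg_left hFn (Nat.cast_nonneg n)) hsum2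
            _ = (n : ℝ) * (((2 : ℝ) ^ n - 1) * S ^ n) := by ring
      exact le_of_mul_le_mul_left hmain hn0
  -- assemble
  have hfinal : ∑ n ∈ Finset.Icc 1 (N - 1), ‖α n‖ ≤
      ∑ n ∈ Finset.Icc 1 (N - 1), (2 : ℝ) ^ n * S ^ (N - 1) := by
    refine Finset.sum_le_sum fun n hn => ?_
    rw [Finset.mem_Icc] at hn
    refine (key n hn.1 hn.2).trans ?_
    have hSn : S ^ n ≤ S ^ (N - 1) := pow_le_pow_right₀ hS1 hn.2
    have h2n1 : (1 : ℝ) ≤ 2 ^ n := one_le_pow₀ (by norm_num)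
    calc ((2 : ℝ) ^ n - 1) * S ^ n ≤ (2 : ℝ) ^ n * S ^ n :=
          mul_le_mul_of_nonneg_right (by linarith) (hSpw n)
      _ ≤ (2 : ℝ) ^ n * S ^ (N - 1) :=
          mul_le_mul_of_nonneg_left hSn (by norm_num : (0:ℝ) ≤ 2 ^ n)
  refine hfinal.trans ?_
  rw [← Finset.sum_mul, geo_sum (N - 1)]
  have hNe : N - 1 + 1 = N := by omega
  rw [hNe]
  have hSpow : (0 : ℝ) ≤ S ^ (N - 1) := hSpw (N - 1)
  nlinarith [hSpow]

end
end

section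
/- Let 1/2 < σ₀ < 1, let N ≥ 2 be an integer, let 0 < η < σ₀ and C > 0, and let b be a complex-valued function on the primes with |b(p)| ≤ C p^η for all primes p. Let X ≥ 2, let Y ≥ 2X + 1, let 0 < H ≤ Y, fix j ∈ {0,1,…,N−1}, set Y_j = 2^j Y, let p* be a prime with X < p* ≤ 2X, and let M_j = {p*} ∪ {p prime : Y_j < p ≤ Y_j + H}. For real numbers θ_p (p ∈ M_j) and 0 ≤ k ≤ N−1 define the k-th derivative sum D_k = Σ_{p ∈ M_j} (−log p)^k b(p) exp(−2πiθ_p) p^{−σ₀} and φ = Σ_{p ∈ M_j} b(p) exp(−2πiθ_p) p^{−σ₀}. Then there is a constant C' depending only on C, σ₀, N, η such that | D_k − (−log Y_j)^k φ | ≤ C' ( (log Y)^{N−2} H² Y^{−(1+σ₀−η)} + (log Y)^{N−1} X^{−(σ₀−η)} ). -/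
attribute [local instance] Classical.propDecidable

lemma abs_pow_sub_pow_le' {x y M : ℝ} (hx : |x| ≤ M) (hy : |y| ≤ M) (k : ℕ) :
    |x ^ k - y ^ k| ≤ k * M ^ (k - 1) * |x - y| := by
  have hM : 0 ≤ M := le_trans (abs_nonneg x) hx
  rw [← geom_sum₂_mul, abs_mul]
  have h1 : |∑ i ∈ Finset.range k, x ^ i * y ^ (k - 1 - i)| ≤ k * M ^ (k - 1) := by
    calc |∑ i ∈ Finset.range k, x ^ i * y ^ (k - 1 - i)|
        ≤ ∑ i ∈ Finset.range k, |x ^ i * y ^ (k - 1 - i)| := Finset.abs_sum_le_sum_abs _ _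
      _ ≤ ∑ i ∈ Finset.range k, M ^ (k - 1) := by
          refine Finset.sum_le_sum fun i hi => ?_
          rw [Finset.mem_range] at hi
          rw [abs_mul, abs_pow, abs_pow]
          calc |x| ^ i * |y| ^ (k - 1 - i) ≤ M ^ i * M ^ (k - 1 - i) := by gcongr
            _ = M ^ (k - 1) := by rw [← pow_add]; congr 1; omega
      _ = k * M ^ (k - 1) := by rw [Finset.sum_const, Finset.card_range, nsmul_eq_mul]
  exact mul_le_mul_of_nonneg_right h1 (abs_nonneg _)

set_option maxHeartbeats 1600000 in
/-- **Claim 3.5 (Claim FSE).**  For `M_j = {p*} ∪ {Y_j < p ≤ Y_j + H}` (`Y_j = 2^j Y`) and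
`D_k = ∑_{p ∈ M_j} (-log p)^k b(p) e^{-2πiθ_p} p^{-σ₀}`, one has
`|D_k - (-log Y_j)^k D_0| ≤ C' ((log Y)^{N-2} H² Y^{-(1+σ₀-η)} + (log Y)^{N-1} X^{-(σ₀-η)})`
with `C'` depending only on `C, σ₀, N, η`. -/
theorem short_interval_derivative_sums
    (σ₀ η C : ℝ) (N : ℕ) (hσ₀ : 1 / 2 < σ₀) (hσ₀1 : σ₀ < 1) (hN : 2 ≤ N)
    (hη0 : 0 < η) (hη : η < σ₀) (hC : 0 < C) :
    ∃ C' : ℝ, 0 < C' ∧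
      ∀ b : ℕ → ℂ, (∀ p : ℕ, p.Prime → ‖b p‖ ≤ C * (p : ℝ) ^ η) →
      ∀ X Y H : ℝ, 2 ≤ X → 2 * X + 1 ≤ Y → 0 < H → H ≤ Y →
      ∀ j : ℕ, j < N →
      ∀ pstar : ℕ, pstar.Prime → X < (pstar : ℝ) → (pstar : ℝ) ≤ 2 * X →
      ∀ θ : ℕ → ℝ, ∀ k : ℕ, k ≤ N - 1 →
        ‖(∑ p ∈ insert pstar
              ((Finset.range (Nat.floor (2 ^ j * Y + H) + 1)).filter
                (fun p : ℕ => p.Prime ∧ 2 ^ j * Y < (p : ℝ) ∧ (p : ℝ) ≤ 2 ^ j * Y + H)),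
            ((-Real.log p : ℂ)) ^ k * b p *
              Complex.exp (-(2 * (Real.pi : ℂ) * Complex.I * (θ p : ℂ))) *
              (((p : ℝ) ^ (-σ₀) : ℝ) : ℂ)) -
          ((-Real.log (2 ^ j * Y) : ℂ)) ^ k *
            ∑ p ∈ insert pstar
              ((Finset.range (Nat.floor (2 ^ j * Y + H) + 1)).filter
                (fun p : ℕ => p.Prime ∧ 2 ^ j * Y < (p : ℝ) ∧ (p : ℝ) ≤ 2 ^ j * Y + H)),
              b p * Complex.exp (-(2 * (Real.pi : ℂ) * Complex.I * (θ p : ℂ))) *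
                (((p : ℝ) ^ (-σ₀) : ℝ) : ℂ)‖ ≤
        C' * (Real.log Y ^ (N - 2) * H ^ 2 * Y ^ (-(1 + σ₀ - η)) +
          Real.log Y ^ (N - 1) * X ^ (-(σ₀ - η))) := by
  refine ⟨(N + 2) * (N + 1) ^ N * C, by positivity, ?_⟩
  intro b hb X Y H hX hXY hH0 hHY j hj pstar hps hXps hps2X θ k hk
  set Yj : ℝ := 2 ^ j * Y with hYjdef
  set F := ((Finset.range (Nat.floor (Yj + H) + 1)).filter
      (fun p : ℕ => p.Prime ∧ Yj < (p : ℝ) ∧ (p : ℝ) ≤ Yj + H)) with hF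
  have hY5 : (5:ℝ) ≤ Y := by linarith
  have hY0 : (0:ℝ) < Y := by linarith
  have hX0 : (0:ℝ) < X := by linarith
  have hlogY : 1 ≤ Real.log Y := by
    rw [Real.le_log_iff_exp_le hY0]
    calc Real.exp 1 ≤ 2.7182818286 := Real.exp_one_lt_d9.le
      _ ≤ 5 := by norm_num
      _ ≤ Y := hY5
  have h2j1 : (1:ℝ) ≤ 2 ^ j := one_le_pow₀ (by norm_num)
  have hYYj : Y ≤ Yj := by rw [hYjdef]; nlinarith
  have hYj0 : (0:ℝ) < Yj := lt_of_lt_of_le hY0 hYYj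
  have hYj1 : (1:ℝ) < Yj := by linarith
  have hlog2 : Real.log 2 ≤ 1 := by
    have := Real.log_le_sub_one_of_pos (by norm_num : (0:ℝ) < 2); linarith
  have hlog2' : 0 ≤ Real.log 2 := Real.log_nonneg (by norm_num)
  set L : ℝ := (N + 1) * Real.log Y with hLdef
  have hL1 : 1 ≤ L := by
    have hN1 : (1:ℝ) ≤ N + 1 := by have : (0:ℝ) ≤ N := Nat.cast_nonneg N; linarith
    rw [hLdef]; nlinarith
  have hjN : (j:ℝ) ≤ N := by exact_mod_cast hj.le
  have hlogYj_le : Real.log Yj ≤ L := by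
    rw [hYjdef, Real.log_mul (by positivity) (ne_of_gt hY0), Real.log_pow, hLdef]
    nlinarith
  have hlogYj0 : 0 < Real.log Yj := Real.log_pos hYj1
  -- the single prime pstar is not in the short-interval set
  have hpsY : (pstar : ℝ) < Yj := by
    calc (pstar : ℝ) ≤ 2 * X := hps2X
      _ < Y := by linarith
      _ ≤ Yj := hYYj
  have hpsF : pstar ∉ F := by
    rw [hF, Finset.mem_filter]
    rintro ⟨-, -, h1, -⟩
    exact absurd h1 (not_lt.mpr hpsY.le)
  -- norm of the "coefficient" part
  have hexp1 : ∀ p : ℕ, ‖Complex.exp (-(2 * (Real.pi : ℂ) * Complex.I * (θ p : ℂ)))‖ = 1 := by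
    intro p
    rw [Complex.norm_exp]
    have : (-(2 * (Real.pi : ℂ) * Complex.I * (θ p : ℂ))).re = 0 := by simp
    rw [this, Real.exp_zero]
  have hanorm : ∀ p : ℕ, p.Prime →
      ‖b p * Complex.exp (-(2 * (Real.pi : ℂ) * Complex.I * (θ p : ℂ)))
        * (((p : ℝ) ^ (-σ₀) : ℝ) : ℂ)‖ ≤ C * (p : ℝ) ^ (η - σ₀) := by
    intro p hp
    have hp0 : (0:ℝ) < p := by exact_mod_cast hp.pos
    rw [norm_mul, norm_mul, hexp1, mul_one, Complex.norm_real,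
      Real.norm_eq_abs, abs_of_nonneg (Real.rpow_nonneg hp0.le _)]
    calc ‖b p‖ * (p:ℝ) ^ (-σ₀) ≤ (C * (p:ℝ) ^ η) * (p:ℝ) ^ (-σ₀) := by
          have := hb p hp
          have h2 : (0:ℝ) ≤ (p:ℝ) ^ (-σ₀) := Real.rpow_nonneg hp0.le _
          exact mul_le_mul_of_nonneg_right this h2
      _ = C * (p:ℝ) ^ (η - σ₀) := by
          rw [mul_assoc, ← Real.rpow_add hp0]; ring_nf
  -- rewrite the difference as a single sum
  rw [Finset.mul_sum, ← Finset.sum_sub_distrib]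
  -- nonnegativity of the right-hand side pieces
  have hlogY0 : (0:ℝ) ≤ Real.log Y := by linarith
  have hR1 : (0:ℝ) ≤ Real.log Y ^ (N - 2) * H ^ 2 * Y ^ (-(1 + σ₀ - η)) := by
    have := Real.rpow_nonneg hY0.le (-(1 + σ₀ - η))
    positivity
  have hR2 : (0:ℝ) ≤ Real.log Y ^ (N - 1) * X ^ (-(σ₀ - η)) := by
    have := Real.rpow_nonneg hX0.le (-(σ₀ - η))
    positivity
  rcases Nat.eq_zero_or_pos k with hk0 | hk1
  · -- trivial case k = 0
    subst hk0
    have : ∀ p ∈ insert pstar F,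
        ((-Real.log p : ℂ)) ^ 0 * b p *
          Complex.exp (-(2 * (Real.pi : ℂ) * Complex.I * (θ p : ℂ))) *
          (((p : ℝ) ^ (-σ₀) : ℝ) : ℂ) -
        ((-Real.log Yj : ℂ)) ^ 0 *
          (b p * Complex.exp (-(2 * (Real.pi : ℂ) * Complex.I * (θ p : ℂ))) *
            (((p : ℝ) ^ (-σ₀) : ℝ) : ℂ)) = 0 := by
      intro p _
      simp only [pow_zero, one_mul]
      ring
    rw [Finset.sum_congr rfl this, Finset.sum_const_zero, norm_zero]
    have hC'pos : (0:ℝ) < ((N:ℝ) + 2) * ((N:ℝ) + 1) ^ N * C := by positivity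
    nlinarith
  -- main case k ≥ 1
  have hkN1 : k ≤ N - 1 := hk
  have hkN : (k:ℝ) ≤ N := by
    have : k ≤ N := le_trans hk (Nat.sub_le _ _)
    exact_mod_cast this
  have hmemPrime : ∀ p ∈ insert pstar F, p.Prime := by
    intro p hp
    rcases Finset.mem_insert.mp hp with h | h
    · subst h; exact hps
    · exact (Finset.mem_filter.mp h).2.1
  set d : ℕ → ℝ := fun p => (-Real.log p) ^ k - (-Real.log Yj) ^ k with hd
  set G : ℕ → ℝ := fun p => |d p| * (C * (p:ℝ) ^ (η - σ₀)) with hG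
  have hpoint : ∀ p ∈ insert pstar F,
      ‖((-Real.log p : ℂ)) ^ k * b p *
          Complex.exp (-(2 * (Real.pi : ℂ) * Complex.I * (θ p : ℂ))) *
          (((p : ℝ) ^ (-σ₀) : ℝ) : ℂ) -
        ((-Real.log Yj : ℂ)) ^ k *
          (b p * Complex.exp (-(2 * (Real.pi : ℂ) * Complex.I * (θ p : ℂ))) *
            (((p : ℝ) ^ (-σ₀) : ℝ) : ℂ))‖ ≤ G p := by
    intro p hp
    have heq : ((-Real.log p : ℂ)) ^ k * b p *
          Complex.exp (-(2 * (Real.pi : ℂ) * Complex.I * (θ p : ℂ))) *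
          (((p : ℝ) ^ (-σ₀) : ℝ) : ℂ) -
        ((-Real.log Yj : ℂ)) ^ k *
          (b p * Complex.exp (-(2 * (Real.pi : ℂ) * Complex.I * (θ p : ℂ))) *
            (((p : ℝ) ^ (-σ₀) : ℝ) : ℂ)) =
        ((d p : ℝ) : ℂ) * (b p * Complex.exp (-(2 * (Real.pi : ℂ) * Complex.I * (θ p : ℂ))) *
            (((p : ℝ) ^ (-σ₀) : ℝ) : ℂ)) := by
      rw [hd]
      push_cast
      ring
    rw [heq, norm_mul, Complex.norm_real, Real.norm_eq_abs, hG]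
    exact mul_le_mul_of_nonneg_left (hanorm p (hmemPrime p hp)) (abs_nonneg _)
  have hL0 : (0:ℝ) ≤ L := by linarith
  have hlogYj_abs : |(-Real.log Yj)| ≤ L := by
    rw [abs_neg, abs_of_pos hlogYj0]; exact hlogYj_le
  -- bound on log p for p in the short interval
  have hlogp_le : ∀ p ∈ F, Real.log p ≤ L := by
    intro p hp
    obtain ⟨-, hpp, hp1, hp2⟩ :=
      (by rw [hF, Finset.mem_filter] at hp; exact ⟨hp.1, hp.2.1, hp.2.2.1, hp.2.2.2⟩ :
        p ∈ Finset.range (Nat.floor (Yj + H) + 1) ∧ p.Prime ∧ Yj < (p:ℝ) ∧ (p:ℝ) ≤ Yj + H)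
    have hple : (p:ℝ) ≤ 2 ^ N * Y := by
      have h2jN : (2:ℝ) ^ j + 1 ≤ 2 ^ N := by
        have h1 : (2:ℝ) ^ j ≤ 2 ^ (N - 1) := by
          apply pow_le_pow_right₀ (by norm_num)
          omega
        have h2 : (1:ℝ) ≤ 2 ^ (N - 1) := one_le_pow₀ (by norm_num)
        have h3 : (2:ℝ) ^ (N - 1) + 2 ^ (N - 1) = 2 ^ N := by
          rw [← two_mul, ← pow_succ']
          congr 1
          omega
        linarith
      calc (p:ℝ) ≤ Yj + H := hp2
        _ ≤ 2 ^ j * Y + Y := by rw [hYjdef]; linarith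
        _ = ((2:ℝ) ^ j + 1) * Y := by ring
        _ ≤ 2 ^ N * Y := by nlinarith
    calc Real.log p ≤ Real.log (2 ^ N * Y) := by
          apply Real.log_le_log (by exact_mod_cast hpp.pos) hple
      _ = N * Real.log 2 + Real.log Y := by
          rw [Real.log_mul (by positivity) (ne_of_gt hY0), Real.log_pow]
      _ ≤ L := by
          rw [hLdef]
          have : (N:ℝ) * Real.log 2 ≤ N := by
            nlinarith [Nat.cast_nonneg (α := ℝ) N]
          nlinarith [Nat.cast_nonneg (α := ℝ) N]
  -- cardinality of the short interval
  have hcard : (F.card : ℝ) ≤ H + 1 := by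
    have hsub : F ⊆ Finset.Ioc ⌊Yj⌋₊ ⌊Yj + H⌋₊ := by
      intro p hp
      rw [hF, Finset.mem_filter] at hp
      rw [Finset.mem_Ioc]
      refine ⟨?_, Nat.le_floor hp.2.2.2⟩
      exact (Nat.floor_lt hYj0.le).mpr hp.2.2.1
    have h1 : (F.card : ℝ) ≤ ((Finset.Ioc ⌊Yj⌋₊ ⌊Yj + H⌋₊).card : ℝ) := by
      exact_mod_cast Finset.card_le_card hsub
    rw [Nat.card_Ioc] at h1
    have hmono : ⌊Yj⌋₊ ≤ ⌊Yj + H⌋₊ := Nat.floor_mono (by linarith)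
    rw [Nat.cast_sub hmono] at h1
    have h2 : (⌊Yj + H⌋₊ : ℝ) ≤ Yj + H := Nat.floor_le (by positivity)
    have h3 : Yj - 1 < (⌊Yj⌋₊ : ℝ) := Nat.sub_one_lt_floor Yj
    linarith
  -- uniform bound on the short-interval terms
  set B : ℝ := (k:ℝ) * L ^ (k - 1) * (H / Yj) * (C * Yj ^ (η - σ₀)) with hB
  have hB0 : (0:ℝ) ≤ B := by
    rw [hB]
    have := Real.rpow_nonneg hYj0.le (η - σ₀)
    positivity
  have hGF : ∀ p ∈ F, G p ≤ B := by
    intro p hp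
    have hmem := hp
    rw [hF, Finset.mem_filter] at hmem
    obtain ⟨-, hpp, hp1, hp2⟩ := hmem
    have hp0 : (0:ℝ) < p := lt_trans hYj0 hp1
    have habs1 : |(-Real.log p)| ≤ L := by
      rw [abs_neg, abs_of_pos (Real.log_pos (lt_trans hYj1 hp1))]
      exact hlogp_le p hp
    have hd1 : |d p| ≤ (k:ℝ) * L ^ (k - 1) * |(-Real.log p) - (-Real.log Yj)| :=
      abs_pow_sub_pow_le' habs1 hlogYj_abs k
    have hd2 : |(-Real.log p) - (-Real.log Yj)| = Real.log p - Real.log Yj := by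
      have h : (-Real.log p) - (-Real.log Yj) = -(Real.log p - Real.log Yj) := by ring
      rw [h, abs_neg, abs_of_nonneg]
      have := Real.log_le_log hYj0 hp1.le
      linarith
    have hd3 : Real.log p - Real.log Yj ≤ H / Yj := by
      have h1 : Real.log ((p:ℝ) / Yj) ≤ (p:ℝ) / Yj - 1 :=
        Real.log_le_sub_one_of_pos (by positivity)
      rw [Real.log_div (ne_of_gt hp0) (ne_of_gt hYj0)] at h1
      have h2 : (p:ℝ) / Yj ≤ (Yj + H) / Yj := by
        gcongr
      have h3 : (Yj + H) / Yj = 1 + H / Yj := by field_simp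
      linarith
    have hd4 : |d p| ≤ (k:ℝ) * L ^ (k - 1) * (H / Yj) := by
      calc |d p| ≤ (k:ℝ) * L ^ (k - 1) * |(-Real.log p) - (-Real.log Yj)| := hd1
        _ = (k:ℝ) * L ^ (k - 1) * (Real.log p - Real.log Yj) := by rw [hd2]
        _ ≤ (k:ℝ) * L ^ (k - 1) * (H / Yj) := by
            apply mul_le_mul_of_nonneg_left hd3
            positivity
    have hrp : C * (p:ℝ) ^ (η - σ₀) ≤ C * Yj ^ (η - σ₀) := by
      apply mul_le_mul_of_nonneg_left _ hC.le
      exact Real.rpow_le_rpow_of_nonpos hYj0 hp1.le (by linarith)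
    rw [hG, hB]
    apply mul_le_mul hd4 hrp
    · positivity
    · positivity
  have hsumF : ∑ p ∈ F, G p ≤ (H + 1) * B := by
    have h1 := Finset.sum_le_card_nsmul F G B hGF
    rw [nsmul_eq_mul] at h1
    calc ∑ p ∈ F, G p ≤ (F.card : ℝ) * B := h1
      _ ≤ (H + 1) * B := mul_le_mul_of_nonneg_right hcard hB0
  have hN1R : (1:ℝ) ≤ (N:ℝ) + 1 := by nlinarith [Nat.cast_nonneg (α := ℝ) N]
  -- bound for the single prime pstar
  have hstar : G pstar ≤ 2 * ((N:ℝ) + 1) ^ N * C *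
      (Real.log Y ^ (N - 1) * X ^ (-(σ₀ - η))) := by
    have hps1 : (1:ℝ) < pstar := by exact_mod_cast hps.one_lt
    have hlogps : |(-Real.log pstar)| ≤ L := by
      rw [abs_neg, abs_of_pos (Real.log_pos hps1)]
      calc Real.log pstar ≤ Real.log Y := Real.log_le_log (by linarith) (by linarith)
        _ ≤ L := by rw [hLdef]; nlinarith [Nat.cast_nonneg (α := ℝ) N]
    have hLk : L ^ k ≤ ((N:ℝ) + 1) ^ N * Real.log Y ^ (N - 1) := by
      rw [hLdef, mul_pow]
      have h1 : ((N:ℝ) + 1) ^ k ≤ ((N:ℝ) + 1) ^ N := pow_le_pow_right₀ hN1R (by omega)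
      have h2 : Real.log Y ^ k ≤ Real.log Y ^ (N - 1) := pow_le_pow_right₀ hlogY hkN1
      exact mul_le_mul h1 h2 (pow_nonneg hlogY0 _) (pow_nonneg (by linarith) _)
    have hdstar : |d pstar| ≤ 2 * (((N:ℝ) + 1) ^ N * Real.log Y ^ (N - 1)) := by
      have habs : |d pstar| ≤ |(-Real.log (pstar:ℝ))| ^ k + |(-Real.log Yj)| ^ k := by
        rw [hd]
        calc |(-Real.log (pstar:ℝ)) ^ k - (-Real.log Yj) ^ k|
            ≤ |(-Real.log (pstar:ℝ)) ^ k| + |(-Real.log Yj) ^ k| := abs_sub _ _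
          _ = |(-Real.log (pstar:ℝ))| ^ k + |(-Real.log Yj)| ^ k := by rw [abs_pow, abs_pow]
      have h1 : |(-Real.log (pstar:ℝ))| ^ k ≤ L ^ k := pow_le_pow_left₀ (abs_nonneg _) hlogps k
      have h2 : |(-Real.log Yj)| ^ k ≤ L ^ k := pow_le_pow_left₀ (abs_nonneg _) hlogYj_abs k
      calc |d pstar| ≤ L ^ k + L ^ k := by linarith
        _ = 2 * L ^ k := by ring
        _ ≤ 2 * (((N:ℝ) + 1) ^ N * Real.log Y ^ (N - 1)) := by linarith
    have hrpst : C * (pstar:ℝ) ^ (η - σ₀) ≤ C * X ^ (-(σ₀ - η)) := by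
      have h1 : (pstar:ℝ) ^ (η - σ₀) ≤ X ^ (η - σ₀) :=
        Real.rpow_le_rpow_of_nonpos hX0 hXps.le (by linarith)
      have h2 : X ^ (η - σ₀) = X ^ (-(σ₀ - η)) := by congr 1; ring
      rw [← h2]
      exact mul_le_mul_of_nonneg_left h1 hC.le
    rw [hG]
    calc |d pstar| * (C * (pstar:ℝ) ^ (η - σ₀))
        ≤ (2 * (((N:ℝ) + 1) ^ N * Real.log Y ^ (N - 1))) * (C * X ^ (-(σ₀ - η))) := by
          apply mul_le_mul hdstar hrpst
          · have := Real.rpow_nonneg (Nat.cast_nonneg pstar : (0:ℝ) ≤ pstar) (η - σ₀)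
            positivity
          · have h3 : (0:ℝ) ≤ ((N:ℝ) + 1) ^ N := pow_nonneg (by linarith) _
            have h4 : (0:ℝ) ≤ Real.log Y ^ (N - 1) := pow_nonneg hlogY0 _
            positivity
      _ = 2 * ((N:ℝ) + 1) ^ N * C * (Real.log Y ^ (N - 1) * X ^ (-(σ₀ - η))) := by ring
  -- the key comparison of the short-interval sum with the main terms
  have hQ : Yj ^ (η - σ₀) / Yj ≤ Y ^ (-(1 + σ₀ - η)) := by
    have e1 : Yj ^ (η - σ₀ - 1) = Yj ^ (η - σ₀) / Yj := by
      rw [Real.rpow_sub hYj0, Real.rpow_one]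
    calc Yj ^ (η - σ₀) / Yj = Yj ^ (η - σ₀ - 1) := e1.symm
      _ ≤ Y ^ (η - σ₀ - 1) := Real.rpow_le_rpow_of_nonpos hY0 hYYj (by linarith)
      _ = Y ^ (-(1 + σ₀ - η)) := by congr 1; ring
  have hQ0 : (0:ℝ) ≤ Yj ^ (η - σ₀) / Yj := by
    have := Real.rpow_nonneg hYj0.le (η - σ₀)
    positivity
  have e4 : H * Y ^ (-(1 + σ₀ - η)) ≤ X ^ (-(σ₀ - η)) := by
    have e3 : Y ^ (-(1 + σ₀ - η)) = Y ^ (η - σ₀) / Y := by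
      rw [show -(1 + σ₀ - η) = η - σ₀ - 1 by ring, Real.rpow_sub hY0, Real.rpow_one]
    have h5 : Y ^ (η - σ₀) ≤ X ^ (η - σ₀) :=
      Real.rpow_le_rpow_of_nonpos hX0 (by linarith) (by linarith)
    have h6 : X ^ (η - σ₀) = X ^ (-(σ₀ - η)) := by congr 1; ring
    have h7 : H / Y ≤ 1 := by rw [div_le_one hY0]; exact hHY
    calc H * Y ^ (-(1 + σ₀ - η)) = (H / Y) * Y ^ (η - σ₀) := by rw [e3]; ring
      _ ≤ 1 * Y ^ (η - σ₀) := mul_le_mul_of_nonneg_right h7 (Real.rpow_nonneg hY0.le _)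
      _ = Y ^ (η - σ₀) := one_mul _
      _ ≤ X ^ (η - σ₀) := h5
      _ = X ^ (-(σ₀ - η)) := h6
  have e5 : (k:ℝ) * L ^ (k - 1) ≤ (N:ℝ) * (((N:ℝ) + 1) ^ N * Real.log Y ^ (N - 2)) := by
    have h1 : L ^ (k - 1) = ((N:ℝ) + 1) ^ (k - 1) * Real.log Y ^ (k - 1) := by
      rw [hLdef, mul_pow]
    have h2 : ((N:ℝ) + 1) ^ (k - 1) ≤ ((N:ℝ) + 1) ^ N := pow_le_pow_right₀ hN1R (by omega)
    have h3 : Real.log Y ^ (k - 1) ≤ Real.log Y ^ (N - 2) := pow_le_pow_right₀ hlogY (by omega)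
    have h4 : L ^ (k - 1) ≤ ((N:ℝ) + 1) ^ N * Real.log Y ^ (N - 2) := by
      rw [h1]
      exact mul_le_mul h2 h3 (pow_nonneg hlogY0 _) (pow_nonneg (by linarith) _)
    exact mul_le_mul hkN h4 (pow_nonneg hL0 _) (Nat.cast_nonneg N)
  have hHB : (H + 1) * B ≤ (N:ℝ) * ((N:ℝ) + 1) ^ N * C *
      (Real.log Y ^ (N - 2) * H ^ 2 * Y ^ (-(1 + σ₀ - η)) +
        Real.log Y ^ (N - 1) * X ^ (-(σ₀ - η))) := by
    have hA0 : (0:ℝ) ≤ (k:ℝ) * L ^ (k - 1) := by positivity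
    have hNN0 : (0:ℝ) ≤ (N:ℝ) * (((N:ℝ) + 1) ^ N * Real.log Y ^ (N - 2)) :=
      le_trans hA0 e5
    have hsplit : (H + 1) * B =
        (k:ℝ) * L ^ (k - 1) * C * (H ^ 2 * (Yj ^ (η - σ₀) / Yj)) +
        (k:ℝ) * L ^ (k - 1) * C * (H * (Yj ^ (η - σ₀) / Yj)) := by
      rw [hB]; ring
    have hYnn : (0:ℝ) ≤ Y ^ (-(1 + σ₀ - η)) := Real.rpow_nonneg hY0.le _
    have hXnn : (0:ℝ) ≤ X ^ (-(σ₀ - η)) := Real.rpow_nonneg hX0.le _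
    have t1 : (k:ℝ) * L ^ (k - 1) * C * (H ^ 2 * (Yj ^ (η - σ₀) / Yj)) ≤
        (N:ℝ) * (((N:ℝ) + 1) ^ N * Real.log Y ^ (N - 2)) * C *
          (H ^ 2 * Y ^ (-(1 + σ₀ - η))) := by
      apply mul_le_mul (mul_le_mul_of_nonneg_right e5 hC.le)
        (mul_le_mul_of_nonneg_left hQ (sq_nonneg H)) (by positivity) (by positivity)
    have t2 : (k:ℝ) * L ^ (k - 1) * C * (H * (Yj ^ (η - σ₀) / Yj)) ≤
        (N:ℝ) * ((N:ℝ) + 1) ^ N * C * (Real.log Y ^ (N - 1) * X ^ (-(σ₀ - η))) := by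
      calc (k:ℝ) * L ^ (k - 1) * C * (H * (Yj ^ (η - σ₀) / Yj))
          ≤ (k:ℝ) * L ^ (k - 1) * C * (H * Y ^ (-(1 + σ₀ - η))) := by
            apply mul_le_mul_of_nonneg_left (mul_le_mul_of_nonneg_left hQ hH0.le)
              (by positivity)
        _ ≤ (k:ℝ) * L ^ (k - 1) * C * X ^ (-(σ₀ - η)) := by
            apply mul_le_mul_of_nonneg_left e4 (by positivity)
        _ ≤ (N:ℝ) * (((N:ℝ) + 1) ^ N * Real.log Y ^ (N - 2)) * C * X ^ (-(σ₀ - η)) := by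
            apply mul_le_mul_of_nonneg_right (mul_le_mul_of_nonneg_right e5 hC.le) hXnn
        _ = (N:ℝ) * ((N:ℝ) + 1) ^ N * C * (Real.log Y ^ (N - 2) * X ^ (-(σ₀ - η))) := by
            ring
        _ ≤ (N:ℝ) * ((N:ℝ) + 1) ^ N * C * (Real.log Y ^ (N - 1) * X ^ (-(σ₀ - η))) := by
            apply mul_le_mul_of_nonneg_left
              (mul_le_mul_of_nonneg_right
                (pow_le_pow_right₀ hlogY (by omega)) hXnn)
            have h3 : (0:ℝ) ≤ ((N:ℝ) + 1) ^ N := pow_nonneg (by linarith) _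
            positivity
    calc (H + 1) * B
        = (k:ℝ) * L ^ (k - 1) * C * (H ^ 2 * (Yj ^ (η - σ₀) / Yj)) +
          (k:ℝ) * L ^ (k - 1) * C * (H * (Yj ^ (η - σ₀) / Yj)) := hsplit
      _ ≤ (N:ℝ) * (((N:ℝ) + 1) ^ N * Real.log Y ^ (N - 2)) * C *
            (H ^ 2 * Y ^ (-(1 + σ₀ - η))) +
          (N:ℝ) * ((N:ℝ) + 1) ^ N * C * (Real.log Y ^ (N - 1) * X ^ (-(σ₀ - η))) :=
        add_le_add t1 t2
      _ = (N:ℝ) * ((N:ℝ) + 1) ^ N * C *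
            (Real.log Y ^ (N - 2) * H ^ 2 * Y ^ (-(1 + σ₀ - η)) +
              Real.log Y ^ (N - 1) * X ^ (-(σ₀ - η))) := by ring
  -- put everything together
  refine le_trans (norm_sum_le _ _) ?_
  refine le_trans (Finset.sum_le_sum hpoint) ?_
  rw [Finset.sum_insert hpsF]
  refine le_trans (add_le_add hstar (le_trans hsumF hHB)) ?_
  have hfin : (0:ℝ) ≤ ((N:ℝ) + 1) ^ N * C *
      (Real.log Y ^ (N - 2) * H ^ 2 * Y ^ (-(1 + σ₀ - η))) := by
    have h3 : (0:ℝ) ≤ ((N:ℝ) + 1) ^ N := pow_nonneg (by linarith) _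
    exact mul_nonneg (mul_nonneg h3 hC.le) hR1
  nlinarith [hfin]
end
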